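/- arXiv:0708.2899 — 4 statements merged into one kernel-verified Lean document; each statement's English description precedes it below -/
import Mathlib

section
/- Let F be a holomorphic self-map of the open unit disk Δ and let τ ∈ ∂Δ. If the unrestricted limit lim_{z→τ} (F(z) − z)/(z − τ)³ = 0 (i.e., (F(z) − z)/(z − τ)³ → 0 as z → τ in Δ without restriction), then F(z) = z for all z ∈ Δ. -/
open Filter Metric

namespace BurnsKrantzAux

open Complex

noncomputable def mob (a z : ℂ) : ℂ := (a - z) / (1 - (starRingEnd ℂ) a * z)

lemma mobius_identity (a z : ℂ) :
    normSq (1 - (starRingEnd ℂ) a * z) - normSq (a - z)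
      = (1 - normSq a) * (1 - normSq z) := by
  simp only [normSq_apply, Complex.sub_re, Complex.sub_im, Complex.mul_re, Complex.mul_im,
    Complex.one_re, Complex.one_im, Complex.conj_re, Complex.conj_im]
  ring

lemma one_sub_ne (a z : ℂ) (ha : ‖a‖ ≤ 1) (hz : ‖z‖ < 1) :
    1 - (starRingEnd ℂ) a * z ≠ 0 := by
  intro h
  have h1 : ‖(starRingEnd ℂ) a * z‖ < 1 := by
    rw [norm_mul, Complex.norm_conj]
    calc ‖a‖ * ‖z‖ ≤ 1 * ‖z‖ :=
          mul_le_mul_of_nonneg_right ha (norm_nonneg z)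
      _ < 1 := by simpa using hz
  have : (starRingEnd ℂ) a * z = 1 := by linear_combination -h
  rw [this] at h1; simp at h1

lemma abs_lt_one {z : ℂ} (h : z ∈ ball (0:ℂ) 1) : ‖z‖ < 1 := by
  simpa using mem_ball_zero_iff.mp h

lemma normSq_lt_one {z : ℂ} (h : z ∈ ball (0:ℂ) 1) : normSq z < 1 := by
  have := abs_lt_one h
  rw [← Complex.sq_norm]
  nlinarith [norm_nonneg z]

lemma mem_ball_of_normSq {z : ℂ} (h : normSq z < 1) : z ∈ ball (0:ℂ) 1 := by
  rw [mem_ball_zero_iff]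
  nlinarith [Complex.sq_norm z, norm_nonneg z]

lemma mob_mapsTo {a : ℂ} (ha : a ∈ ball (0:ℂ) 1) :
    Set.MapsTo (mob a) (ball (0:ℂ) 1) (ball (0:ℂ) 1) := by
  intro z hz
  have hne := one_sub_ne a z (abs_lt_one ha).le (abs_lt_one hz)
  have hpos : 0 < normSq (1 - (starRingEnd ℂ) a * z) := normSq_pos.mpr hne
  apply mem_ball_of_normSq
  rw [mob, normSq_div, div_lt_one hpos]
  have := mobius_identity a z
  nlinarith [normSq_lt_one ha, normSq_lt_one hz, normSq_nonneg a, normSq_nonneg z]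

lemma mob_invol {a z : ℂ} (ha : a ∈ ball (0:ℂ) 1) (hz : z ∈ ball (0:ℂ) 1) :
    mob a (mob a z) = z := by
  have hne := one_sub_ne a z (abs_lt_one ha).le (abs_lt_one hz)
  have hca : (starRingEnd ℂ) a * a = (normSq a : ℂ) := by
    rw [mul_comm]; exact Complex.mul_conj a
  have hane : (1 : ℂ) - normSq a ≠ 0 := by
    have h := normSq_lt_one ha
    intro hh
    have : ((1 : ℂ) - normSq a).re = 0 := by rw [hh]; simp
    simp at this; linarith
  have hd2 : 1 - (starRingEnd ℂ) a * ((a - z) / (1 - (starRingEnd ℂ) a * z))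
      = ((1:ℂ) - normSq a) / (1 - (starRingEnd ℂ) a * z) := by
    rw [eq_div_iff hne]; field_simp; linear_combination -hca
  have hn2 : a - (a - z) / (1 - (starRingEnd ℂ) a * z)
      = z * ((1:ℂ) - normSq a) / (1 - (starRingEnd ℂ) a * z) := by
    rw [eq_div_iff hne, sub_mul, div_mul_cancel₀ _ hne]; linear_combination (-z) * hca
  rw [mob, mob, hd2, hn2, div_div_div_cancel_right₀, mul_div_assoc,
    div_self hane, mul_one]
  exact hne

lemma mob_zero (a : ℂ) : mob a 0 = a := by simp [mob]

lemma mob_self (a : ℂ) : mob a a = 0 := by simp [mob]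

lemma mob_diffOn {a : ℂ} (ha : a ∈ ball (0:ℂ) 1) :
    DifferentiableOn ℂ (mob a) (ball (0:ℂ) 1) := by
  apply DifferentiableOn.div
  · exact (differentiable_const a).differentiableOn.sub differentiable_id.differentiableOn
  · exact (differentiable_const _).differentiableOn.sub
      ((differentiable_const _).mul differentiable_id).differentiableOn
  · exact fun z hz => one_sub_ne a z (abs_lt_one ha).le (abs_lt_one hz)

lemma schwarz_pick {f : ℂ → ℂ} (hd : DifferentiableOn ℂ f (ball (0:ℂ) 1))
    (hm : Set.MapsTo f (ball (0:ℂ) 1) (ball (0:ℂ) 1))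
    {z w : ℂ} (hz : z ∈ ball (0:ℂ) 1) (hw : w ∈ ball (0:ℂ) 1) :
    ‖mob (f w) (f z)‖ ≤ ‖mob w z‖ := by
  set g : ℂ → ℂ := mob (f w) ∘ f ∘ mob w with hg
  have hfw : f w ∈ ball (0:ℂ) 1 := hm hw
  have hgd : DifferentiableOn ℂ g (ball (0:ℂ) 1) :=
    (mob_diffOn hfw).comp (hd.comp (mob_diffOn hw) (mob_mapsTo hw))
      (hm.comp (mob_mapsTo hw))
  have hgm : Set.MapsTo g (ball (0:ℂ) 1) (ball (0:ℂ) 1) :=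
    (mob_mapsTo hfw).comp (hm.comp (mob_mapsTo hw))
  have hg0 : g 0 = 0 := by
    simp only [hg, Function.comp_apply, mob_zero, mob_self]
  have hmem : mob w z ∈ ball (0:ℂ) 1 := mob_mapsTo hw hz
  have h := Complex.norm_le_norm_of_mapsTo_ball hgd (hgm.mono_right ball_subset_closedBall) hg0 (abs_lt_one hmem)
  have hgval : g (mob w z) = mob (f w) (f z) := by
    simp only [hg, Function.comp_apply, mob_invol hw hz]
  rwa [hgval] at h

lemma schwarz_pick' {f : ℂ → ℂ} (hd : DifferentiableOn ℂ f (ball (0:ℂ) 1))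
    (hm : Set.MapsTo f (ball (0:ℂ) 1) (ball (0:ℂ) 1))
    {z w : ℂ} (hz : z ∈ ball (0:ℂ) 1) (hw : w ∈ ball (0:ℂ) 1) :
    (1 - normSq w) * (1 - normSq z) * normSq (1 - (starRingEnd ℂ) (f w) * f z)
      ≤ (1 - normSq (f w)) * (1 - normSq (f z)) * normSq (1 - (starRingEnd ℂ) w * z) := by
  have h := schwarz_pick hd hm hz hw
  have h2 : normSq (mob (f w) (f z)) ≤ normSq (mob w z) := by
    rw [← Complex.sq_norm, ← Complex.sq_norm]
    exact pow_le_pow_left₀ (norm_nonneg _) h 2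
  have hfz := hm hz
  have hfw := hm hw
  have hB : 0 < normSq (1 - (starRingEnd ℂ) (f w) * f z) :=
    normSq_pos.mpr (one_sub_ne _ _ (abs_lt_one hfw).le (abs_lt_one hfz))
  have hD : 0 < normSq (1 - (starRingEnd ℂ) w * z) :=
    normSq_pos.mpr (one_sub_ne _ _ (abs_lt_one hw).le (abs_lt_one hz))
  rw [mob, mob, normSq_div, normSq_div] at h2
  have hAD := (div_le_div_iff₀ hB hD).mp h2
  have i1 := mobius_identity w z
  have i2 := mobius_identity (f w) (f z)
  nlinarith [hAD, hB.le, hD.le]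

end BurnsKrantzAux
set_option maxHeartbeats 2000000 in
/-- Burns–Krantz: if `F` is a holomorphic self-map of the open unit
disk `Δ = ball 0 1` and for some `τ` with `|τ| = 1` the unrestricted limit
`lim_{z→τ, z∈Δ} (F z - z)/(z - τ)^3 = 0`, then `F` is the identity on `Δ`. -/
theorem burns_krantz_disk (F : ℂ → ℂ)
    (hF : DifferentiableOn ℂ F (ball (0 : ℂ) 1))
    (hFself : Set.MapsTo F (ball (0 : ℂ) 1) (ball (0 : ℂ) 1))
    (τ : ℂ) (hτ : ‖τ‖ = 1)
    (hlim : Tendsto (fun z : ℂ => (F z - z) / (z - τ) ^ 3)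
      (nhdsWithin τ (ball (0 : ℂ) 1)) (nhds 0)) :
    ∀ z ∈ ball (0 : ℂ) 1, F z = z := by
  have hτn : Complex.normSq τ = 1 := by rw [← Complex.sq_norm, hτ]; norm_num
  have hτ0 : τ ≠ 0 := by intro h; rw [h] at hτ; simp at hτ
  have hne_tau : ∀ z ∈ ball (0:ℂ) 1, z - τ ≠ 0 := by
    intro z hz h
    have h2 : z = τ := by linear_combination h
    have := BurnsKrantzAux.abs_lt_one hz
    rw [h2, hτ] at this; linarith
  have htau_sub : ∀ z ∈ ball (0:ℂ) 1, τ - z ≠ 0 := by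
    intro z hz h
    exact hne_tau z hz (by linear_combination -h)
  have htau_subF : ∀ z ∈ ball (0:ℂ) 1, τ - F z ≠ 0 := fun z hz =>
    htau_sub (F z) (hFself hz)
  set u : ℂ → ℂ := fun z => (τ + F z) / (τ - F z) - (τ + z) / (τ - z) with hu_def
  set l := nhdsWithin τ (ball (0:ℂ) 1) with hl
  have hev : ∀ᶠ z in l, z ∈ ball (0:ℂ) 1 := eventually_mem_nhdsWithin
  have ht1 : Tendsto (fun z : ℂ => z - τ) l (nhds 0) := by
    have h : Tendsto (fun z : ℂ => z - τ) (nhds τ) (nhds (τ - τ)) :=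
      (continuous_id.sub continuous_const).tendsto τ
    simpa using h.mono_left nhdsWithin_le_nhds
  have L1 : Tendsto (fun z : ℂ => F z - z) l (nhds 0) := by
    have h := hlim.mul (ht1.pow 3)
    rw [zero_mul] at h
    apply h.congr'
    filter_upwards [hev] with z hz
    exact div_mul_cancel₀ _ (pow_ne_zero 3 (hne_tau z hz))
  have hid : Tendsto (fun z : ℂ => z) l (nhds τ) :=
    tendsto_id.mono_left nhdsWithin_le_nhds
  have hFtend : Tendsto F l (nhds τ) := by
    have h := L1.add hid
    rw [zero_add] at h
    exact h.congr (fun z => by ring_nf)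
  have L2 : Tendsto (fun z : ℂ => (F z - z) / (z - τ)) l (nhds 0) := by
    have h := hlim.mul (ht1.pow 2)
    rw [zero_mul] at h
    apply h.congr'
    filter_upwards [hev] with z hz
    have hzt := hne_tau z hz
    field_simp
  have L3' : Tendsto (fun z : ℂ => (τ - F z) / (τ - z)) l (nhds 1) := by
    have h := (tendsto_const_nhds (x := (1:ℂ))).add L2
    rw [add_zero] at h
    apply h.congr'
    filter_upwards [hev] with z hz
    have h1 := hne_tau z hz
    have h2 := htau_sub z hz
    field_simp
    ring
  have L3 : Tendsto (fun z : ℂ => (z - τ) / (τ - F z)) l (nhds (-1)) := by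
    have hinv : Tendsto (fun z : ℂ => ((τ - F z) / (τ - z))⁻¹) l (nhds 1) := by
      simpa using L3'.inv₀ one_ne_zero
    exact hinv.neg.congr (fun z => by rw [inv_div, ← neg_div, neg_sub])
  have L4 : Tendsto (fun z : ℂ => u z / (z - τ)) l (nhds 0) := by
    have h := ((tendsto_const_nhds (x := (-2*τ:ℂ))).mul hlim).mul L3
    rw [mul_zero, zero_mul] at h
    apply h.congr'
    filter_upwards [hev] with z hz
    have h1 := htau_subF z hz
    have h2 := htau_sub z hz
    have h3 := hne_tau z hz
    rw [hu_def]
    field_simp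
    ring
  have L5 : Tendsto u l (nhds 0) := by
    have h := L4.mul ht1
    rw [zero_mul] at h
    apply h.congr'
    filter_upwards [hev] with z hz
    exact div_mul_cancel₀ _ (hne_tau z hz)
  -- the radial sequence
  set w : ℕ → ℂ := fun n => ((1 - ((n:ℝ)+1)⁻¹ : ℝ) : ℂ) * τ with hw_def
  have hr_nonneg : ∀ n : ℕ, (0:ℝ) ≤ 1 - ((n:ℝ)+1)⁻¹ := by
    intro n
    have h1 : ((n:ℝ)+1)⁻¹ ≤ 1 := by
      rw [inv_le_one_iff₀]; right; linarith [Nat.cast_nonneg (α := ℝ) n]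
    linarith
  have hr_pos : ∀ n : ℕ, (0:ℝ) < ((n:ℝ)+1)⁻¹ := by
    intro n; positivity
  have habs_w : ∀ n, ‖w n‖ = 1 - ((n:ℝ)+1)⁻¹ := by
    intro n
    rw [hw_def]
    simp only [norm_mul, Complex.norm_real, Real.norm_eq_abs, hτ, mul_one]
    exact abs_of_nonneg (hr_nonneg n)
  have hw_ball : ∀ n, w n ∈ ball (0:ℂ) 1 := by
    intro n
    rw [mem_ball_zero_iff, habs_w n]
    linarith [hr_pos n]
  have habs_wt : ∀ n, ‖w n - τ‖ = ((n:ℝ)+1)⁻¹ := by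
    intro n
    have : w n - τ = ((-(((n:ℝ)+1)⁻¹) : ℝ) : ℂ) * τ := by
      rw [hw_def]; push_cast; ring
    rw [this, norm_mul, Complex.norm_real, Real.norm_eq_abs, hτ, mul_one, abs_neg]
    exact abs_of_pos (hr_pos n)
  have hw_tend : Tendsto w atTop (nhds τ) := by
    have h1 : Tendsto (fun n : ℕ => ((n:ℝ)+1)⁻¹) atTop (nhds 0) :=
      tendsto_one_div_add_atTop_nhds_zero_nat.congr (fun n => by rw [one_div])
    have h2 : Tendsto (fun n : ℕ => (1 - ((n:ℝ)+1)⁻¹ : ℝ)) atTop (nhds 1) := by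
      have := (tendsto_const_nhds (x := (1:ℝ))).sub h1
      simpa using this
    have h3 : Tendsto (fun n : ℕ => ((1 - ((n:ℝ)+1)⁻¹ : ℝ) : ℂ)) atTop (nhds 1) := by
      have h := (Complex.continuous_ofReal.tendsto 1).comp h2
      exact h
    have h4 := h3.mul (tendsto_const_nhds (x := τ))
    rw [one_mul] at h4
    exact h4
  have hw_tendl : Tendsto w atTop l :=
    tendsto_nhdsWithin_of_tendsto_nhds_of_eventually_within w hw_tend
      (Eventually.of_forall hw_ball)
  -- 1 - normSq (w n) ≥ |w n - τ| > 0
  have hns_w : ∀ n, ‖w n - τ‖ ≤ 1 - Complex.normSq (w n) := by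
    intro n
    have h1 : Complex.normSq (w n) = ‖w n‖ ^ 2 := (Complex.sq_norm _).symm
    rw [habs_wt n, h1, habs_w n]
    have h2 := hr_pos n
    have h3 : ((n:ℝ)+1)⁻¹ ≤ 1 := by nlinarith [hr_nonneg n]
    nlinarith
  -- ratio tends to 1
  have hρ : Tendsto (fun n => (1 - Complex.normSq (F (w n))) / (1 - Complex.normSq (w n)))
      atTop (nhds 1) := by
    have hFw_ball : ∀ n, F (w n) ∈ ball (0:ℂ) 1 := fun n => hFself (hw_ball n)
    have hdiff : Tendsto (fun n =>
        (1 - Complex.normSq (F (w n))) / (1 - Complex.normSq (w n)) - 1) atTop (nhds 0) := by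
      apply squeeze_zero_norm (a := fun n => 2 * ‖(F (w n) - w n) / (w n - τ)‖)
      · intro n
        have hpos : 0 < 1 - Complex.normSq (w n) :=
          lt_of_lt_of_le (by rw [habs_wt n]; exact hr_pos n) (hns_w n)
        have heq : (1 - Complex.normSq (F (w n))) / (1 - Complex.normSq (w n)) - 1
            = (Complex.normSq (w n) - Complex.normSq (F (w n))) / (1 - Complex.normSq (w n)) := by
          field_simp
          ring
        rw [heq, Real.norm_eq_abs, abs_div, abs_of_pos hpos]
        have hb1 : |Complex.normSq (w n) - Complex.normSq (F (w n))|
            ≤ 2 * ‖F (w n) - w n‖ := by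
          have ha1 : ‖w n‖ ≤ 1 := (BurnsKrantzAux.abs_lt_one (hw_ball n)).le
          have ha2 : ‖F (w n)‖ ≤ 1 := (BurnsKrantzAux.abs_lt_one (hFw_ball n)).le
          have hd : |‖w n‖ - ‖F (w n)‖|
              ≤ ‖w n - F (w n)‖ := abs_norm_sub_norm_le _ _
          have h1 : Complex.normSq (w n) = ‖w n‖ ^ 2 := (Complex.sq_norm _).symm
          have h2 : Complex.normSq (F (w n)) = ‖F (w n)‖ ^ 2 :=
            (Complex.sq_norm _).symm
          have h3 : ‖w n - F (w n)‖ = ‖F (w n) - w n‖ := by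
            rw [← norm_neg]; ring_nf
          rw [h1, h2]
          rw [h3] at hd
          have hnn := norm_nonneg (w n)
          have hnn2 := norm_nonneg (F (w n))
          rw [abs_le] at hd ⊢
          constructor <;> nlinarith [hd.1, hd.2]
        calc |Complex.normSq (w n) - Complex.normSq (F (w n))| / (1 - Complex.normSq (w n))
            ≤ 2 * ‖F (w n) - w n‖ / (1 - Complex.normSq (w n)) := by
              apply div_le_div_of_nonneg_right hb1 hpos.le |>.trans_eq rfl
          _ ≤ 2 * ‖F (w n) - w n‖ / ‖w n - τ‖ := by
              apply div_le_div_of_nonneg_left _ _ (hns_w n)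
              · positivity
              · rw [habs_wt n]; exact hr_pos n
          _ = 2 * ‖(F (w n) - w n) / (w n - τ)‖ := by
              rw [norm_div]; ring
      · have h1 : Tendsto (fun n => (F (w n) - w n) / (w n - τ)) atTop (nhds 0) :=
          L2.comp hw_tendl
        have h2 := (continuous_norm.tendsto 0).comp h1
        simp only [Function.comp_def, norm_zero] at h2
        have h3 := (tendsto_const_nhds (x := (2:ℝ))).mul h2
        rw [mul_zero] at h3
        exact h3
    have := hdiff.add (tendsto_const_nhds (x := (1:ℝ)))
    rw [zero_add] at this
    exact this.congr (fun n => by ring)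
  -- Julia's inequality
  have julia : ∀ z ∈ ball (0:ℂ) 1,
      (1 - Complex.normSq z) * Complex.normSq (1 - (starRingEnd ℂ) τ * F z)
        ≤ (1 - Complex.normSq (F z)) * Complex.normSq (1 - (starRingEnd ℂ) τ * z) := by
    intro z hz
    have hFw_ball : ∀ n, F (w n) ∈ ball (0:ℂ) 1 := fun n => hFself (hw_ball n)
    have hFw_tend : Tendsto (fun n => F (w n)) atTop (nhds τ) := hFtend.comp hw_tendl
    have hIn : ∀ n, (1 - Complex.normSq z) * Complex.normSq (1 - (starRingEnd ℂ) (F (w n)) * F z)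
        ≤ ((1 - Complex.normSq (F (w n))) / (1 - Complex.normSq (w n)))
          * ((1 - Complex.normSq (F z)) * Complex.normSq (1 - (starRingEnd ℂ) (w n) * z)) := by
      intro n
      have hpos : 0 < 1 - Complex.normSq (w n) :=
        lt_of_lt_of_le (by rw [habs_wt n]; exact hr_pos n) (hns_w n)
      have h := BurnsKrantzAux.schwarz_pick' hF hFself hz (hw_ball n)
      rw [div_mul_eq_mul_div, le_div_iff₀ hpos]
      nlinarith [h]
    have hL : Tendsto (fun n =>
        (1 - Complex.normSq z) * Complex.normSq (1 - (starRingEnd ℂ) (F (w n)) * F z))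
        atTop (nhds ((1 - Complex.normSq z) * Complex.normSq (1 - (starRingEnd ℂ) τ * F z))) := by
      apply Tendsto.const_mul
      have hconj : Tendsto (fun n => (starRingEnd ℂ) (F (w n))) atTop
          (nhds ((starRingEnd ℂ) τ)) := (Complex.continuous_conj.tendsto τ).comp hFw_tend
      have h2 : Tendsto (fun n => 1 - (starRingEnd ℂ) (F (w n)) * F z) atTop
          (nhds (1 - (starRingEnd ℂ) τ * F z)) :=
        tendsto_const_nhds.sub (hconj.mul tendsto_const_nhds)
      exact (Complex.continuous_normSq.tendsto _).comp h2
    have hR : Tendsto (fun n =>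
        ((1 - Complex.normSq (F (w n))) / (1 - Complex.normSq (w n)))
          * ((1 - Complex.normSq (F z)) * Complex.normSq (1 - (starRingEnd ℂ) (w n) * z)))
        atTop (nhds (1 * ((1 - Complex.normSq (F z))
          * Complex.normSq (1 - (starRingEnd ℂ) τ * z)))) := by
      apply hρ.mul
      apply Tendsto.const_mul
      have hconj : Tendsto (fun n => (starRingEnd ℂ) (w n)) atTop
          (nhds ((starRingEnd ℂ) τ)) := (Complex.continuous_conj.tendsto τ).comp hw_tend
      have h2 : Tendsto (fun n => 1 - (starRingEnd ℂ) (w n) * z) atTop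
          (nhds (1 - (starRingEnd ℂ) τ * z)) :=
        tendsto_const_nhds.sub (hconj.mul tendsto_const_nhds)
      exact (Complex.continuous_normSq.tendsto _).comp h2
    have := le_of_tendsto_of_tendsto' hL hR hIn
    rwa [one_mul] at this
  -- real part of u is nonnegative
  have hsub_eq : ∀ x : ℂ, τ - x = τ * (1 - (starRingEnd ℂ) τ * x) := by
    intro x
    have h := Complex.mul_conj τ
    rw [hτn] at h
    push_cast at h
    linear_combination x * h
  have hre_quot : ∀ x : ℂ, τ - x ≠ 0 →
      ((τ + x) / (τ - x)).re = (1 - Complex.normSq x) / Complex.normSq (τ - x) := by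
    intro x hx
    have h1 : τ.re * τ.re + τ.im * τ.im = 1 := by
      simpa [Complex.normSq_apply] using hτn
    rw [Complex.div_re, ← add_div]
    congr 1
    simp only [Complex.add_re, Complex.add_im, Complex.sub_re, Complex.sub_im,
      Complex.normSq_apply]
    linear_combination h1
  have hre : ∀ z ∈ ball (0:ℂ) 1, 0 ≤ (u z).re := by
    intro z hz
    have h1 := htau_subF z hz
    have h2 := htau_sub z hz
    have hzF := hFself hz
    rw [hu_def]
    simp only [Complex.sub_re]
    rw [hre_quot (F z) h1, hre_quot z h2, sub_nonneg]
    have hd1 : 0 < Complex.normSq (τ - z) := Complex.normSq_pos.mpr h2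
    have hd2 : 0 < Complex.normSq (τ - F z) := Complex.normSq_pos.mpr h1
    rw [div_le_div_iff₀ hd1 hd2]
    have e1 : Complex.normSq (τ - z) = Complex.normSq (1 - (starRingEnd ℂ) τ * z) := by
      rw [hsub_eq z, Complex.normSq_mul, hτn, one_mul]
    have e2 : Complex.normSq (τ - F z) = Complex.normSq (1 - (starRingEnd ℂ) τ * F z) := by
      rw [hsub_eq (F z), Complex.normSq_mul, hτn, one_mul]
    rw [e1, e2]
    exact julia z hz
  -- u is differentiable on the ball
  have hu_diff : DifferentiableOn ℂ u (ball (0:ℂ) 1) := by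
    rw [hu_def]
    apply DifferentiableOn.sub
    · exact DifferentiableOn.div ((differentiableOn_const τ).add hF)
        ((differentiableOn_const τ).sub hF) htau_subF
    · exact DifferentiableOn.div ((differentiableOn_const τ).add differentiableOn_id)
        ((differentiableOn_const τ).sub differentiableOn_id) htau_sub
  -- G = (1-u)/(1+u)
  set G : ℂ → ℂ := fun z => (1 - u z) / (1 + u z) with hG_def
  have hGden : ∀ z ∈ ball (0:ℂ) 1, 1 + u z ≠ 0 := by
    intro z hz h
    have h1 : (1 + u z).re = 0 := by rw [h]; simp
    simp only [Complex.add_re, Complex.one_re] at h1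
    have := hre z hz
    linarith
  have hnormSq_id : ∀ v : ℂ, Complex.normSq (1 + v) - Complex.normSq (1 - v) = 4 * v.re := by
    intro v
    simp only [Complex.normSq_apply, Complex.add_re, Complex.add_im, Complex.sub_re,
      Complex.sub_im, Complex.one_re, Complex.one_im]
    ring
  have hG_le : ∀ z ∈ ball (0:ℂ) 1, Complex.normSq (G z) ≤ 1 := by
    intro z hz
    have hd : 0 < Complex.normSq (1 + u z) := Complex.normSq_pos.mpr (hGden z hz)
    rw [hG_def]
    rw [Complex.normSq_div, div_le_one hd]
    have := hnormSq_id (u z)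
    have := hre z hz
    linarith
  have hG_diff : DifferentiableOn ℂ G (ball (0:ℂ) 1) := by
    rw [hG_def]
    exact DifferentiableOn.div ((differentiableOn_const 1).sub hu_diff)
      ((differentiableOn_const 1).add hu_diff) hGden
  have habs_one_sub_G : ∀ z ∈ ball (0:ℂ) 1,
      ‖1 - G z‖ ≤ 2 * ‖u z‖ := by
    intro z hz
    have hden := hGden z hz
    have heq : 1 - G z = 2 * u z / (1 + u z) := by
      rw [hG_def]
      field_simp
      ring
    rw [heq, norm_div, norm_mul]
    have habs_den : 1 ≤ ‖1 + u z‖ := by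
      have h1 := Complex.abs_re_le_norm (1 + u z)
      have h2 : (1 + u z).re = 1 + (u z).re := by simp
      have h3 := hre z hz
      have h4 : |(1 + u z).re| = 1 + (u z).re := by rw [h2]; exact abs_of_pos (by linarith)
      linarith [h4.symm.le.trans h1]
    calc ‖(2:ℂ)‖ * ‖u z‖ / ‖1 + u z‖
        ≤ ‖(2:ℂ)‖ * ‖u z‖ / 1 := by
          apply div_le_div_of_nonneg_left _ one_pos habs_den
          positivity
      _ = 2 * ‖u z‖ := by simp [Complex.norm_two]
  -- main dichotomy: u vanishes identically
  have key : ∀ z ∈ ball (0:ℂ) 1, u z = 0 := by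
    by_cases hall : ∀ z ∈ ball (0:ℂ) 1, 0 < (u z).re
    · -- case B : contradiction
      exfalso
      have hG_maps : Set.MapsTo G (ball (0:ℂ) 1) (ball (0:ℂ) 1) := by
        intro z hz
        apply BurnsKrantzAux.mem_ball_of_normSq
        have hd : 0 < Complex.normSq (1 + u z) := Complex.normSq_pos.mpr (hGden z hz)
        rw [hG_def, Complex.normSq_div, div_lt_one hd]
        have i1 := hnormSq_id (u z)
        have i2 := hall z hz
        linarith
      have h0ball : (0:ℂ) ∈ ball (0:ℂ) 1 := mem_ball_self one_pos
      have hG0 : ‖G 0‖ < 1 := BurnsKrantzAux.abs_lt_one (hG_maps h0ball)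
      have hbound : ∀ n, (1 - ‖G 0‖)^2 * ‖w n - τ‖
          ≤ 4 * ‖u (w n)‖ := by
        intro n
        have hwb := hw_ball n
        have hGwb := hG_maps hwb
        have hsp := BurnsKrantzAux.schwarz_pick' hG_diff hG_maps hwb h0ball
        simp only [map_zero, zero_mul, mul_zero, sub_zero, one_mul, map_one,
          Complex.normSq_zero, Complex.normSq_one, mul_one] at hsp
        have hGwn_lt : ‖G (w n)‖ < 1 := BurnsKrantzAux.abs_lt_one hGwb
        have habs1 : ‖(starRingEnd ℂ) (G 0) * G (w n)‖ ≤ ‖G 0‖ := by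
          rw [norm_mul, Complex.norm_conj]
          calc ‖G 0‖ * ‖G (w n)‖
              ≤ ‖G 0‖ * 1 :=
                mul_le_mul_of_nonneg_left hGwn_lt.le (norm_nonneg _)
            _ = ‖G 0‖ := mul_one _
        have habs2 : 1 - ‖G 0‖
            ≤ ‖1 - (starRingEnd ℂ) (G 0) * G (w n)‖ := by
          have hd := abs_norm_sub_norm_le 1 ((starRingEnd ℂ) (G 0) * G (w n))
          rw [norm_one] at hd
          have := le_abs_self (1 - ‖(starRingEnd ℂ) (G 0) * G (w n)‖)
          linarith
        have hA2 : (1 - ‖G 0‖)^2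
            ≤ Complex.normSq (1 - (starRingEnd ℂ) (G 0) * G (w n)) := by
          rw [← Complex.sq_norm]
          have h0 : 0 ≤ 1 - ‖G 0‖ := by linarith
          exact pow_le_pow_left₀ h0 habs2 2
        have hA1 := hns_w n
        have hA4 : 1 - Complex.normSq (G (w n)) ≤ 2 * (1 - ‖G (w n)‖) := by
          have h1 : Complex.normSq (G (w n)) = ‖G (w n)‖ ^ 2 :=
            (Complex.sq_norm _).symm
          nlinarith [norm_nonneg (G (w n))]
        have hA5 : 1 - ‖G (w n)‖ ≤ ‖1 - G (w n)‖ := by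
          have hd := abs_norm_sub_norm_le 1 (G (w n))
          rw [norm_one] at hd
          have := le_abs_self (1 - ‖G (w n)‖)
          linarith
        have hA6 := habs_one_sub_G (w n) hwb
        have hnsGw : Complex.normSq (G (w n)) ≤ 1 := hG_le (w n) hwb
        have hnsG0 : 0 ≤ Complex.normSq (G 0) := Complex.normSq_nonneg _
        have hnswn : Complex.normSq (w n) < 1 := BurnsKrantzAux.normSq_lt_one hwb
        have habswt_pos : 0 < ‖w n - τ‖ := by
          rw [habs_wt n]; exact hr_pos n
        -- chain of inequalities
        have hpos2 : (0:ℝ) ≤ (1 - ‖G 0‖)^2 := sq_nonneg _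
        calc (1 - ‖G 0‖)^2 * ‖w n - τ‖
            ≤ (1 - ‖G 0‖)^2 * (1 - Complex.normSq (w n)) :=
              mul_le_mul_of_nonneg_left hA1 hpos2
          _ ≤ Complex.normSq (1 - (starRingEnd ℂ) (G 0) * G (w n))
                * (1 - Complex.normSq (w n)) :=
              mul_le_mul_of_nonneg_right hA2 (by linarith)
          _ ≤ (1 - Complex.normSq (G 0)) * (1 - Complex.normSq (G (w n))) := by
              nlinarith [hsp]
          _ ≤ 1 - Complex.normSq (G (w n)) := by nlinarith [Complex.normSq_nonneg (G (w n))]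
          _ ≤ 2 * (1 - ‖G (w n)‖) := hA4
          _ ≤ 2 * ‖1 - G (w n)‖ := by linarith
          _ ≤ 4 * ‖u (w n)‖ := by linarith
      have hdiv : ∀ n, (1 - ‖G 0‖)^2
          ≤ 4 * ‖u (w n) / (w n - τ)‖ := by
        intro n
        have habswt_pos : 0 < ‖w n - τ‖ := by
          rw [habs_wt n]; exact hr_pos n
        have h := hbound n
        calc (1 - ‖G 0‖)^2
            = (1 - ‖G 0‖)^2 * ‖w n - τ‖ / ‖w n - τ‖ := by
              field_simp
          _ ≤ 4 * ‖u (w n)‖ / ‖w n - τ‖ :=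
              div_le_div_of_nonneg_right h habswt_pos.le
          _ = 4 * ‖u (w n) / (w n - τ)‖ := by
              rw [norm_div, mul_div_assoc]
      have htend : Tendsto (fun n => 4 * ‖u (w n) / (w n - τ)‖) atTop (nhds 0) := by
        have h1 : Tendsto (fun n => u (w n) / (w n - τ)) atTop (nhds 0) := L4.comp hw_tendl
        have h2 := (continuous_norm.tendsto 0).comp h1
        simp only [Function.comp_def, norm_zero] at h2
        have h3 := (tendsto_const_nhds (x := (4:ℝ))).mul h2
        rw [mul_zero] at h3
        exact h3
      have hfin : (1 - ‖G 0‖)^2 ≤ 0 :=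
        le_of_tendsto_of_tendsto' tendsto_const_nhds htend hdiv
      nlinarith [hG0]
    · -- case A : G attains max modulus inside, hence constant
      push_neg at hall
      obtain ⟨z₀, hz₀, hz₀re⟩ := hall
      have hz₀eq : (u z₀).re = 0 := le_antisymm hz₀re (hre z₀ hz₀)
      have hnsqG : Complex.normSq (G z₀) = 1 := by
        have hd : Complex.normSq (1 + u z₀) ≠ 0 :=
          (Complex.normSq_pos.mpr (hGden z₀ hz₀)).ne'
        have hid2 := hnormSq_id (u z₀)
        rw [hz₀eq] at hid2
        have heq : Complex.normSq (1 - u z₀) = Complex.normSq (1 + u z₀) := by linarith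
        rw [hG_def]
        simp only
        rw [Complex.normSq_div, heq, div_self hd]
      have habsG : ‖G z₀‖ = 1 := by
        rw [Complex.norm_def, hnsqG, Real.sqrt_one]
      have hmax : IsMaxOn (norm ∘ G) (ball (0:ℂ) 1) z₀ := by
        intro x hx
        have h1 := hG_le x hx
        have h2 : ‖G x‖ ≤ 1 := by
          rw [Complex.norm_def]
          calc Real.sqrt (Complex.normSq (G x)) ≤ Real.sqrt 1 := Real.sqrt_le_sqrt h1
            _ = 1 := Real.sqrt_one
        show ‖G x‖ ≤ ‖G z₀‖
        rw [habsG]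
        exact h2
      have hconst := Complex.eqOn_of_isPreconnected_of_isMaxOn_norm
        (convex_ball (0:ℂ) 1).isPreconnected isOpen_ball hG_diff hz₀ hmax
      set c := G z₀ with hc_def
      have hrel : ∀ z ∈ ball (0:ℂ) 1, u z * (1 + c) = 1 - c := by
        intro z hz
        have hGz : G z = c := hconst hz
        have hden := hGden z hz
        have h1 : (1 - u z) = G z * (1 + u z) := by
          rw [hG_def]; field_simp
        rw [hGz] at h1
        linear_combination -h1
      have hc1 : (1:ℂ) + c ≠ 0 := by
        intro h
        have h0ball : (0:ℂ) ∈ ball (0:ℂ) 1 := mem_ball_self one_pos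
        have h2 := hrel 0 h0ball
        rw [h] at h2
        have h3 : c = -1 := by linear_combination h
        rw [h3] at h2
        norm_num at h2
      intro z hz
      have h2 := hrel z hz
      have h3 : u z = (1 - c) / (1 + c) := by
        rw [eq_div_iff hc1]; exact h2
      have hk0 : (1 - c) / (1 + c) = 0 := by
        have h1 : Tendsto (fun n => u (w n)) atTop (nhds 0) := L5.comp hw_tendl
        have h4 : (fun n => u (w n)) = fun _ => (1 - c) / (1 + c) := by
          funext n
          have h5 := hrel (w n) (hw_ball n)
          rw [eq_div_iff hc1]
          exact h5
        rw [h4] at h1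
        exact tendsto_nhds_unique tendsto_const_nhds h1
      rw [h3, hk0]
  -- conclusion
  intro z hz
  have hu0 := key z hz
  have h1 := htau_subF z hz
  have h2 := htau_sub z hz
  have h4 : (τ + F z) / (τ - F z) = (τ + z) / (τ - z) := by
    have h5 : (τ + F z) / (τ - F z) - (τ + z) / (τ - z) = 0 := hu0
    linear_combination h5
  have h3 : (τ + F z) * (τ - z) = (τ + z) * (τ - F z) := (div_eq_div_iff h1 h2).mp h4
  have h5 : 2 * τ * (F z - z) = 0 := by linear_combination h3
  have h6 : F z - z = 0 :=
    (mul_eq_zero.mp h5).resolve_left (mul_ne_zero two_ne_zero hτ0)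
  linear_combination h6
end

section
/- Let F be a holomorphic self-map of the open unit disk Δ and let τ ∈ ∂Δ. If the angular limit ∠lim_{z→τ} (F(z) − z)/(z − τ)³ = 0, then F(z) = z for all z ∈ Δ. -/
open Filter Metric

/-- The nontangential (Stolz-type) approach region `Γ_k(τ)` at a boundary point `τ`
of the unit disk: `{z ∈ Δ : |z - τ| / (1 - |z|) < k}`. -/
def nontangentialRegion (k : ℝ) (τ : ℂ) : Set ℂ :=
  {z : ℂ | ‖z‖ < 1 ∧ ‖z - τ‖ < k * (1 - ‖z‖)}

/-- `g` has angular limit `L` at the boundary point `τ`: `g z → L` as `z → τ`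
within every nontangential approach region `Γ_k(τ)`, `k > 1`. -/
def AngularLimit (g : ℂ → ℂ) (τ L : ℂ) : Prop :=
  ∀ k : ℝ, 1 < k →
    Tendsto g (nhdsWithin τ (nontangentialRegion k τ)) (nhds L)

open Complex


noncomputable def mob (a z : ℂ) : ℂ := (a - z) / (1 - (starRingEnd ℂ) a * z)

lemma one_sub_ne {w : ℂ} (h : ‖w‖ < 1) : (1 : ℂ) - w ≠ 0 := by
  intro h0
  have : w = 1 := by linear_combination -h0
  simp [this] at h

lemma normSq_identity (a z : ℂ) :
    (normSq (1 - (starRingEnd ℂ) a * z) : ℝ) - normSq (a - z)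
      = (1 - normSq a) * (1 - normSq z) := by
  apply Complex.ofReal_injective
  push_cast
  rw [← Complex.mul_conj, ← Complex.mul_conj, ← Complex.mul_conj, ← Complex.mul_conj]
  simp only [map_sub, map_mul, map_one, Complex.conj_conj]
  ring

lemma den_ne {a z : ℂ} (ha : ‖a‖ < 1) (hz : ‖z‖ ≤ 1) :
    (1 : ℂ) - (starRingEnd ℂ) a * z ≠ 0 := by
  apply one_sub_ne
  rw [norm_mul, Complex.norm_conj]
  calc ‖a‖ * ‖z‖ ≤ ‖a‖ * 1 :=
        mul_le_mul_of_nonneg_left hz (norm_nonneg a)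
    _ < 1 := by simpa using ha

lemma mob_one_sub_sq {a z : ℂ} (ha : ‖a‖ < 1) (hz : ‖z‖ < 1) :
    1 - ‖mob a z‖ ^ 2
      = (1 - ‖a‖ ^ 2) * (1 - ‖z‖ ^ 2)
        / ‖1 - (starRingEnd ℂ) a * z‖ ^ 2 := by
  have hd := den_ne ha hz.le
  have hd0 := norm_pos_iff.mpr hd
  have hd2 : ‖1 - (starRingEnd ℂ) a * z‖ ^ 2 ≠ 0 := by positivity
  rw [mob, norm_div, div_pow]
  rw [eq_div_iff hd2, sub_mul, one_mul, div_mul_cancel₀ _ hd2]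
  simp only [Complex.sq_norm]
  linarith [normSq_identity a z]

lemma mob_abs_lt {a z : ℂ} (ha : ‖a‖ < 1) (hz : ‖z‖ < 1) :
    ‖mob a z‖ < 1 := by
  have h := mob_one_sub_sq ha hz
  have h1 : (0:ℝ) < 1 - ‖a‖ ^ 2 := by nlinarith [norm_nonneg a]
  have h2 : (0:ℝ) < 1 - ‖z‖ ^ 2 := by nlinarith [norm_nonneg z]
  have hd := den_ne ha hz.le
  have hd2 : (0:ℝ) < ‖1 - (starRingEnd ℂ) a * z‖ ^ 2 := by
    have := norm_pos_iff.mpr hd; positivity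
  have : 0 < 1 - ‖mob a z‖ ^ 2 := by rw [h]; positivity
  nlinarith [norm_nonneg (mob a z)]

lemma mob_zero (a : ℂ) : mob a 0 = a := by simp [mob]

lemma mob_mob {a z : ℂ} (ha : ‖a‖ < 1) (hz : ‖z‖ < 1) :
    mob a (mob a z) = z := by
  have hd1 := den_ne ha hz.le
  have hd2 := den_ne ha (mob_abs_lt ha hz).le
  have hno : (1:ℂ) - a * (starRingEnd ℂ) a ≠ 0 := by
    apply one_sub_ne
    rw [norm_mul, Complex.norm_conj]
    nlinarith [norm_nonneg a]
  rw [mob, mob] at *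
  field_simp at hd2 ⊢
  linear_combination z * mul_inv_cancel₀ hno

lemma mob_diff {a : ℂ} (ha : ‖a‖ < 1) :
    DifferentiableOn ℂ (mob a) (ball (0:ℂ) 1) := by
  apply DifferentiableOn.div
  · exact (differentiable_const a).differentiableOn.sub differentiable_id.differentiableOn
  · exact (differentiable_const 1).differentiableOn.sub
      ((differentiable_const _).mul differentiable_id).differentiableOn
  · intro z hz
    exact den_ne ha (le_of_lt (by simpa using mem_ball_zero_iff.mp hz))

lemma mob_maps {a : ℂ} (ha : ‖a‖ < 1) :
    Set.MapsTo (mob a) (ball (0:ℂ) 1) (ball (0:ℂ) 1) := by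
  intro z hz
  rw [mem_ball_zero_iff] at *
  exact mob_abs_lt ha hz

/-- Schwarz–Pick for a map vanishing at `w`. -/
lemma schwarz_pick_zero {g : ℂ → ℂ} (hg : DifferentiableOn ℂ g (ball (0:ℂ) 1))
    (hgm : Set.MapsTo g (ball (0:ℂ) 1) (ball (0:ℂ) 1))
    {w : ℂ} (hw : ‖w‖ < 1) (hgw : g w = 0)
    {z : ℂ} (hz : ‖z‖ < 1) :
    ‖g z‖ ≤ ‖mob w z‖ := by
  have hmm := mob_maps hw
  have h : DifferentiableOn ℂ (g ∘ mob w) (ball (0:ℂ) 1) :=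
    hg.comp (mob_diff hw) hmm
  have hmaps : Set.MapsTo (g ∘ mob w) (ball (0:ℂ) 1) (ball (0:ℂ) 1) :=
    hgm.comp hmm
  have h0 : (g ∘ mob w) 0 = 0 := by simp [Function.comp, mob_zero, hgw]
  have key := Complex.norm_le_norm_of_mapsTo_ball h (hmaps.mono_right ball_subset_closedBall) h0
    (z := mob w z) (mob_abs_lt hw hz)
  simpa [Function.comp, mob_mob hw hz] using key

/-- Schwarz–Pick. -/
lemma schwarz_pick {f : ℂ → ℂ} (hf : DifferentiableOn ℂ f (ball (0:ℂ) 1))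
    (hfm : Set.MapsTo f (ball (0:ℂ) 1) (ball (0:ℂ) 1))
    {b z : ℂ} (hb : ‖b‖ < 1) (hz : ‖z‖ < 1) :
    ‖mob (f b) (f z)‖ ≤ ‖mob b z‖ := by
  have hfb : ‖f b‖ < 1 := by
    have := hfm (by rwa [mem_ball_zero_iff]  : b ∈ ball (0:ℂ) 1)
    rwa [mem_ball_zero_iff] at this
  have hg : DifferentiableOn ℂ (mob (f b) ∘ f) (ball (0:ℂ) 1) :=
    (mob_diff hfb).comp hf hfm
  have hgm := (mob_maps hfb).comp hfm
  have hgw : (mob (f b) ∘ f) b = 0 := by simp [Function.comp, mob]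
  exact schwarz_pick_zero hg hgm hb hgw hz

lemma normSq_pm (P a : ℂ) :
    normSq (P + (starRingEnd ℂ) a) - normSq (P - a) = 4 * P.re * a.re := by
  simp only [Complex.normSq_apply, Complex.add_re, Complex.add_im, Complex.sub_re,
    Complex.sub_im, Complex.conj_re, Complex.conj_im]
  ring

set_option maxHeartbeats 2000000 in
/-- A holomorphic function on the disk with nonnegative real part which is `o(1-r)`
along the radius ending at `τ` vanishes identically. -/
lemma pos_re_vanish {p : ℂ → ℂ} (hp : DifferentiableOn ℂ p (ball (0:ℂ) 1))
    (hre : ∀ z ∈ ball (0:ℂ) 1, 0 ≤ (p z).re)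
    {τ : ℂ} (hτ : ‖τ‖ = 1)
    (hdecay : Tendsto (fun r : ℝ => ‖p ((r:ℂ) * τ)‖ / (1 - r))
      (nhdsWithin 1 (Set.Iio 1)) (nhds 0)) :
    ∀ w ∈ ball (0:ℂ) 1, p w = 0 := by
  intro w hwD
  have hw : ‖w‖ < 1 := by
    rwa [mem_ball_zero_iff] at hwD
  by_contra hne
  set c : ℝ := ‖p w‖ with hc
  have hcpos : 0 < c := norm_pos_iff.mpr hne
  set K : ℝ := c * (1 - ‖w‖ ^ 2) / 16 with hK
  have hw2 : 0 < 1 - ‖w‖ ^ 2 := by nlinarith [norm_nonneg w]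
  have hKpos : 0 < K := by positivity
  -- main claim
  have claim : ∀ r : ℝ, 0 ≤ r → r < 1 → ∀ ε : ℝ, 0 < ε → ε ≤ c / 2 →
      K * (1 - r) ≤ 2 * ‖p ((r:ℂ) * τ)‖ + 2 * ε := by
    intro r hr0 hr1 ε hε0 hεc
    set a : ℂ := p w + (ε : ℂ) with ha
    have hare : 0 < a.re := by
      have := hre w hwD
      simp only [ha, Complex.add_re, Complex.ofReal_re]
      linarith
    have habs : c / 2 ≤ ‖a‖ := by
      have h1 : ‖p w‖ ≤ ‖a‖ + ‖-(ε:ℂ)‖ := by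
        have : p w = a + (-(ε:ℂ)) := by rw [ha]; ring
        rw [this]; exact norm_add_le _ _
      have h2 : ‖-(ε:ℂ)‖ = ε := by
        rw [norm_neg, Complex.norm_real, Real.norm_eq_abs, _root_.abs_of_pos hε0]
      rw [h2] at h1
      rw [← hc] at h1
      linarith
    set q : ℂ → ℂ := fun z => (p z + (ε:ℂ) - a) / (p z + (ε:ℂ) + (starRingEnd ℂ) a)
      with hq
    have hdenre : ∀ z ∈ ball (0:ℂ) 1, 0 < (p z + (ε:ℂ) + (starRingEnd ℂ) a).re := by
      intro z hz
      simp only [Complex.add_re, Complex.ofReal_re, Complex.conj_re]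
      have := hre z hz
      linarith
    have hden : ∀ z ∈ ball (0:ℂ) 1, p z + (ε:ℂ) + (starRingEnd ℂ) a ≠ 0 := by
      intro z hz h0
      have := hdenre z hz
      rw [h0] at this
      simp at this
    have hqlt : ∀ z ∈ ball (0:ℂ) 1, ‖q z‖ < 1 := by
      intro z hz
      have hd := hden z hz
      have hdpos : 0 < ‖p z + (ε:ℂ) + (starRingEnd ℂ) a‖ :=
        norm_pos_iff.mpr hd
      rw [hq]
      simp only [norm_div]
      rw [div_lt_one hdpos]
      have hlt : normSq (p z + (ε:ℂ) - a) < normSq (p z + (ε:ℂ) + (starRingEnd ℂ) a) := by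
        have h4 := normSq_pm (p z + (ε:ℂ)) a
        have hPre : 0 < (p z + (ε:ℂ)).re := by
          simp only [Complex.add_re, Complex.ofReal_re]
          have := hre z hz
          linarith
        nlinarith
      have := (Real.sqrt_lt_sqrt (normSq_nonneg _) hlt)
      rwa [Complex.norm_def, Complex.norm_def]
    have hqmaps : Set.MapsTo q (ball (0:ℂ) 1) (ball (0:ℂ) 1) := by
      intro z hz
      rw [mem_ball_zero_iff]
      exact hqlt z hz
    have hqdiff : DifferentiableOn ℂ q (ball (0:ℂ) 1) := by
      apply DifferentiableOn.div
      · exact (hp.add (differentiableOn_const _)).sub (differentiableOn_const _)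
      · exact (hp.add (differentiableOn_const _)).add (differentiableOn_const _)
      · exact hden
    have hqw : q w = 0 := by
      rw [hq]
      simp only [ha]
      rw [div_eq_zero_iff]
      left; ring
    -- the point rτ
    have hrtD : ((r:ℂ) * τ) ∈ ball (0:ℂ) 1 := by
      rw [mem_ball_zero_iff, norm_mul, Complex.norm_real, Real.norm_eq_abs, hτ,
        mul_one, _root_.abs_of_nonneg hr0]
      exact hr1
    have hrtabs : ‖(r:ℂ) * τ‖ < 1 := by
      rwa [mem_ball_zero_iff] at hrtD
    have hSP := schwarz_pick_zero hqdiff hqmaps hw hqw hrtabs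
    -- lower bound on 1 - |mob w (rτ)|
    have hmoblt := mob_abs_lt hw hrtabs
    have hmobsq := mob_one_sub_sq hw hrtabs
    have hmobbd : (1 - ‖w‖ ^ 2) * (1 - r) / 8 ≤ 1 - ‖mob w ((r:ℂ) * τ)‖ := by
      have hden2 : ‖1 - (starRingEnd ℂ) w * ((r:ℂ) * τ)‖ ≤ 2 := by
        calc ‖1 - (starRingEnd ℂ) w * ((r:ℂ) * τ)‖
            ≤ ‖(1:ℂ)‖ + ‖(starRingEnd ℂ) w * ((r:ℂ) * τ)‖ :=
              norm_sub_le _ _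
          _ ≤ 1 + 1 := by
              rw [norm_one]
              refine add_le_add le_rfl ?_
              rw [norm_mul, Complex.norm_conj]
              have := mul_le_mul hw.le hrtabs.le (norm_nonneg _) zero_le_one
              linarith
          _ = 2 := by norm_num
      have hrt2 : ‖(r:ℂ) * τ‖ ^ 2 ≤ r := by
        rw [norm_mul, Complex.norm_real, Real.norm_eq_abs, hτ, mul_one, _root_.abs_of_nonneg hr0]
        nlinarith
      have hdpos : 0 < ‖1 - (starRingEnd ℂ) w * ((r:ℂ) * τ)‖ :=
        norm_pos_iff.mpr (den_ne hw hrtabs.le)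
      have h1 : (1 - ‖w‖ ^ 2) * (1 - r) / 4 ≤ 1 - ‖mob w ((r:ℂ) * τ)‖ ^ 2 := by
        rw [hmobsq, div_le_div_iff₀ (by norm_num) (by positivity)]
        have hd4 : ‖1 - (starRingEnd ℂ) w * ((r:ℂ) * τ)‖ ^ 2 ≤ 4 := by nlinarith
        have hrt1 : 1 - r ≤ 1 - ‖(r:ℂ) * τ‖ ^ 2 := by linarith
        nlinarith [mul_nonneg hw2.le (by linarith : (0:ℝ) ≤ 1 - r)]
      nlinarith [norm_nonneg (mob w ((r:ℂ) * τ)), hmoblt]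
    -- key identity
    have hkey : (p ((r:ℂ) * τ) + (ε:ℂ)) * (1 - q ((r:ℂ) * τ))
        = a + (starRingEnd ℂ) a * q ((r:ℂ) * τ) := by
      rw [hq]
      have hd := hden _ hrtD
      field_simp
      ring
    -- estimates
    have hub : ‖(p ((r:ℂ) * τ) + (ε:ℂ)) * (1 - q ((r:ℂ) * τ))‖
        ≤ 2 * ‖p ((r:ℂ) * τ)‖ + 2 * ε := by
      rw [norm_mul]
      have h1 : ‖p ((r:ℂ) * τ) + (ε:ℂ)‖ ≤ ‖p ((r:ℂ) * τ)‖ + ε := by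
        calc ‖p ((r:ℂ) * τ) + (ε:ℂ)‖
            ≤ ‖p ((r:ℂ) * τ)‖ + ‖(ε:ℂ)‖ := norm_add_le _ _
          _ = ‖p ((r:ℂ) * τ)‖ + ε := by
              rw [Complex.norm_real, Real.norm_eq_abs, abs_of_pos hε0]
      have h2 : ‖1 - q ((r:ℂ) * τ)‖ ≤ 2 := by
        calc ‖1 - q ((r:ℂ) * τ)‖
            ≤ ‖(1:ℂ)‖ + ‖q ((r:ℂ) * τ)‖ := norm_sub_le _ _
          _ ≤ 1 + 1 := by
              rw [norm_one]
              exact add_le_add le_rfl (hqlt _ hrtD).le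
          _ = 2 := by norm_num
      calc ‖p ((r:ℂ) * τ) + (ε:ℂ)‖ * ‖1 - q ((r:ℂ) * τ)‖
          ≤ (‖p ((r:ℂ) * τ)‖ + ε) * 2 := by
            apply mul_le_mul h1 h2 (norm_nonneg _)
            have := norm_nonneg (p ((r:ℂ) * τ))
            linarith
        _ = 2 * ‖p ((r:ℂ) * τ)‖ + 2 * ε := by ring
    have hlb : ‖a‖ * (1 - ‖q ((r:ℂ) * τ)‖)
        ≤ ‖a + (starRingEnd ℂ) a * q ((r:ℂ) * τ)‖ := by
      have this0 := norm_sub_le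
        (a + (starRingEnd ℂ) a * q ((r:ℂ) * τ)) ((starRingEnd ℂ) a * q ((r:ℂ) * τ))
      simp only [add_sub_cancel_right] at this0
      have : ‖a‖ - ‖a‖ * ‖q ((r:ℂ) * τ)‖
          ≤ ‖a + (starRingEnd ℂ) a * q ((r:ℂ) * τ)‖ := by
        rw [norm_mul, Complex.norm_conj] at this0
        linarith
      calc ‖a‖ * (1 - ‖q ((r:ℂ) * τ)‖)
          = ‖a‖ - ‖a‖ * ‖q ((r:ℂ) * τ)‖ := by ring
        _ ≤ _ := this
    have hq1 : (1 - ‖w‖ ^ 2) * (1 - r) / 8 ≤ 1 - ‖q ((r:ℂ) * τ)‖ := by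
      linarith [hSP, hmobbd]
    calc K * (1 - r) = (c / 2) * ((1 - ‖w‖ ^ 2) * (1 - r) / 8) := by
          rw [hK]; ring
      _ ≤ ‖a‖ * (1 - ‖q ((r:ℂ) * τ)‖) := by
          apply mul_le_mul habs hq1 (by nlinarith)
          exact norm_nonneg a
      _ ≤ ‖a + (starRingEnd ℂ) a * q ((r:ℂ) * τ)‖ := hlb
      _ = ‖(p ((r:ℂ) * τ) + (ε:ℂ)) * (1 - q ((r:ℂ) * τ))‖ := by rw [hkey]
      _ ≤ 2 * ‖p ((r:ℂ) * τ)‖ + 2 * ε := hub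
  -- let ε → 0
  have claim2 : ∀ r : ℝ, 0 ≤ r → r < 1 → K * (1 - r) ≤ 2 * ‖p ((r:ℂ) * τ)‖ := by
    intro r hr0 hr1
    apply le_of_forall_pos_le_add
    intro δ hδ
    have hε0 : 0 < min (δ / 2) (c / 2) := lt_min (by linarith) (by linarith)
    have := claim r hr0 hr1 (min (δ / 2) (c / 2)) hε0 (min_le_right _ _)
    have h2 : 2 * min (δ / 2) (c / 2) ≤ δ := by
      have := min_le_left (δ / 2) (c / 2)
      linarith
    linarith
  -- contradiction with decay
  have hev : ∀ᶠ r : ℝ in nhdsWithin (1:ℝ) (Set.Iio 1),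
      K / 2 ≤ ‖p ((r:ℂ) * τ)‖ / (1 - r) := by
    have hmem : Set.Ioo (0:ℝ) 1 ∈ nhdsWithin (1:ℝ) (Set.Iio 1) := by
      rw [mem_nhdsWithin]
      exact ⟨Set.Ioi 0, isOpen_Ioi, by norm_num, by
        intro x hx
        exact ⟨hx.1, hx.2⟩⟩
    filter_upwards [hmem] with r hr
    have h1r : 0 < 1 - r := by linarith [hr.2]
    have := claim2 r hr.1.le hr.2
    rw [le_div_iff₀ h1r]
    linarith
  have := ge_of_tendsto hdecay hev
  linarith

lemma sub_ne_zero_of_abs_lt {τ w : ℂ} (hτ : ‖τ‖ = 1) (hw : ‖w‖ < 1) :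
    τ - w ≠ 0 := by
  refine sub_ne_zero.mpr fun h => ?_
  rw [← h, hτ] at hw
  exact lt_irrefl 1 hw

lemma re_quot {τ w : ℂ} (hτ : ‖τ‖ = 1) (hw : ‖w‖ < 1) :
    ((τ + w) / (τ - w)).re = (1 - ‖w‖ ^ 2) / ‖τ - w‖ ^ 2 := by
  have h1 : normSq τ = 1 := by
    have : ‖τ‖ ^ 2 = 1 := by rw [hτ]; norm_num
    rwa [Complex.sq_norm] at this
  have hnum : (τ + w).re * (τ - w).re + (τ + w).im * (τ - w).im = 1 - normSq w := by
    simp only [Complex.add_re, Complex.add_im, Complex.sub_re, Complex.sub_im,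
      Complex.normSq_apply] at *
    linear_combination h1
  rw [Complex.div_re, ← add_div, hnum, Complex.sq_norm, Complex.sq_norm]

lemma abs_one_sub_conj {τ : ℂ} (hτ : ‖τ‖ = 1) (w : ℂ) :
    ‖1 - (starRingEnd ℂ) τ * w‖ = ‖τ - w‖ := by
  have h1 : normSq τ = 1 := by
    have : ‖τ‖ ^ 2 = 1 := by rw [hτ]; norm_num
    rwa [Complex.sq_norm] at this
  have h2 : τ * (starRingEnd ℂ) τ = 1 := by
    rw [Complex.mul_conj, h1, Complex.ofReal_one]
  have h3 : τ - w = τ * (1 - (starRingEnd ℂ) τ * w) := by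
    linear_combination w * h2
  rw [h3, norm_mul, hτ, one_mul]

lemma mem_D {z : ℂ} : z ∈ ball (0:ℂ) 1 ↔ ‖z‖ < 1 := by
  rw [mem_ball_zero_iff]

set_option maxHeartbeats 4000000 in
/-- if `F` is a holomorphic self-map of the open unit disk and for some
`τ` with `|τ| = 1` the angular limit `∠lim_{z→τ} (F z - z)/(z - τ)^3 = 0`, then
`F` is the identity on the disk. -/
theorem burns_krantz_disk_angular (F : ℂ → ℂ)
    (hF : DifferentiableOn ℂ F (ball (0 : ℂ) 1))
    (hFself : Set.MapsTo F (ball (0 : ℂ) 1) (ball (0 : ℂ) 1))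
    (τ : ℂ) (hτ : ‖τ‖ = 1)
    (hlim : AngularLimit (fun z : ℂ => (F z - z) / (z - τ) ^ 3) τ 0) :
    ∀ z ∈ ball (0 : ℂ) 1, F z = z := by
  have hτ0 : τ ≠ 0 := by
    intro h; rw [h] at hτ; simp at hτ
  set g : ℂ → ℂ := fun z => (F z - z) / (z - τ) ^ 3 with hgdef
  have hg2 : Tendsto g (nhdsWithin τ (nontangentialRegion 2 τ)) (nhds 0) :=
    hlim 2 one_lt_two
  have hIoo : Set.Ioo (0:ℝ) 1 ∈ nhdsWithin (1:ℝ) (Set.Iio 1) := by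
    rw [mem_nhdsWithin]
    exact ⟨Set.Ioi 0, isOpen_Ioi, by norm_num, fun x hx => ⟨hx.1, hx.2⟩⟩
  have habs_rt : ∀ r : ℝ, 0 ≤ r → ‖(r:ℂ) * τ‖ = r := by
    intro r hr
    rw [norm_mul, Complex.norm_real, Real.norm_eq_abs, hτ, mul_one, _root_.abs_of_nonneg hr]
  have habs_sub : ∀ r : ℝ, r < 1 → ‖(r:ℂ) * τ - τ‖ = 1 - r := by
    intro r hr
    have h2 : (r:ℂ) * τ - τ = ((r - 1 : ℝ) : ℂ) * τ := by push_cast; ring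
    rw [h2, norm_mul, Complex.norm_real, Real.norm_eq_abs, hτ, mul_one, abs_of_neg (by linarith)]
    ring
  have hcont : Tendsto (fun r : ℝ => (r:ℂ) * τ) (nhds 1) (nhds τ) := by
    have h : Continuous (fun r : ℝ => (r:ℂ) * τ) :=
      Complex.continuous_ofReal.mul continuous_const
    have h2 := h.tendsto (1:ℝ)
    simpa using h2
  have hbase : Tendsto (fun r : ℝ => (r:ℂ) * τ) (nhdsWithin 1 (Set.Iio 1)) (nhds τ) :=
    hcont.mono_left nhdsWithin_le_nhds
  have hφ : Tendsto (fun r : ℝ => (r:ℂ) * τ) (nhdsWithin 1 (Set.Iio 1))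
      (nhdsWithin τ (nontangentialRegion 2 τ)) := by
    rw [tendsto_nhdsWithin_iff]
    refine ⟨hbase, ?_⟩
    filter_upwards [hIoo] with r hr
    refine ⟨?_, ?_⟩
    · rw [habs_rt r hr.1.le]; exact hr.2
    · rw [habs_rt r hr.1.le, habs_sub r hr.2]
      linarith [hr.2]
  set E : ℝ → ℝ := fun r => ‖g ((r:ℂ) * τ)‖ with hEdef
  have hE : Tendsto E (nhdsWithin 1 (Set.Iio 1)) (nhds 0) := by
    have h := (continuous_norm.tendsto 0).comp (hg2.comp hφ)
    simpa [hEdef, Function.comp_def] using h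
  have hEnn : ∀ r, 0 ≤ E r := fun r => norm_nonneg _
  have hFest : ∀ r ∈ Set.Ioo (0:ℝ) 1,
      ‖F ((r:ℂ) * τ) - (r:ℂ) * τ‖ = E r * (1 - r) ^ 3 := by
    intro r hr
    have hne : ((r:ℂ) * τ - τ) ≠ 0 := by
      intro h
      have := habs_sub r hr.2
      rw [h] at this
      simp at this
      linarith [hr.2]
    have hid : F ((r:ℂ) * τ) - (r:ℂ) * τ = g ((r:ℂ) * τ) * ((r:ℂ) * τ - τ) ^ 3 := by
      rw [hgdef]
      exact (div_mul_cancel₀ _ (pow_ne_zero 3 hne)).symm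
    rw [hid, norm_mul, norm_pow, habs_sub r hr.2, hEdef]
  have hrtD : ∀ r : ℝ, 0 ≤ r → r < 1 → ((r:ℂ) * τ) ∈ ball (0:ℂ) 1 := by
    intro r h0 h1
    rw [mem_D, habs_rt r h0]
    exact h1
  -- F(rτ) → τ
  have hdiff0 : Tendsto (fun r : ℝ => F ((r:ℂ) * τ) - (r:ℂ) * τ)
      (nhdsWithin 1 (Set.Iio 1)) (nhds 0) := by
    rw [tendsto_zero_iff_norm_tendsto_zero]
    refine squeeze_zero' (Eventually.of_forall fun r => norm_nonneg _) ?_ hE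
    filter_upwards [hIoo] with r hr
    rw [hFest r hr]
    have hcube : (1 - r) ^ 3 ≤ 1 := by
      have h01 : (0:ℝ) ≤ 1 - r := by linarith [hr.2]
      have h11 : 1 - r ≤ 1 := by linarith [hr.1]
      calc (1 - r) ^ 3 = (1 - r) * (1 - r) ^ 2 := by ring
        _ ≤ 1 * 1 := by nlinarith
        _ = 1 := by norm_num
    calc E r * (1 - r) ^ 3 ≤ E r * 1 := mul_le_mul_of_nonneg_left hcube (hEnn r)
      _ = E r := mul_one _
  have hFτ : Tendsto (fun r : ℝ => F ((r:ℂ) * τ)) (nhdsWithin 1 (Set.Iio 1)) (nhds τ) := by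
    have h := hdiff0.add hbase
    simpa using h
  set B : ℝ → ℝ := fun r => ‖F ((r:ℂ) * τ)‖ with hBdef
  have hB1 : Tendsto B (nhdsWithin 1 (Set.Iio 1)) (nhds 1) := by
    have h := (continuous_norm.tendsto τ).comp hFτ
    rw [hτ] at h
    simpa [hBdef, Function.comp_def] using h
  have hBlt : ∀ r : ℝ, 0 ≤ r → r < 1 → B r < 1 := by
    intro r h0 h1
    exact mem_D.mp (hFself (hrtD r h0 h1))
  have hBsub : ∀ r ∈ Set.Ioo (0:ℝ) 1, |B r - r| ≤ E r * (1 - r) ^ 3 := by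
    intro r hr
    have h := abs_norm_sub_norm_le (F ((r:ℂ) * τ)) ((r:ℂ) * τ)
    rw [habs_rt r hr.1.le] at h
    rw [← hFest r hr]
    exact h
  -- ratio (1 - B r)/(1 - r) → 1
  have hratio : Tendsto (fun r : ℝ => (1 - B r) / (1 - r))
      (nhdsWithin 1 (Set.Iio 1)) (nhds 1) := by
    have hsub : Tendsto (fun r : ℝ => (1 - B r) / (1 - r) - 1)
        (nhdsWithin 1 (Set.Iio 1)) (nhds 0) := by
      refine squeeze_zero_norm' ?_ hE
      filter_upwards [hIoo] with r hr
      have h1r : (0:ℝ) < 1 - r := by linarith [hr.2]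
      have heq : (1 - B r) / (1 - r) - 1 = (r - B r) / (1 - r) := by
        field_simp
        ring
      rw [heq, Real.norm_eq_abs, abs_div, abs_of_pos h1r, div_le_iff₀ h1r]
      have hb := hBsub r hr
      rw [abs_sub_comm] at hb
      have hc3 : (1 - r) ^ 3 ≤ 1 - r := by
        have h01 : (0:ℝ) ≤ 1 - r := by linarith [hr.2]
        have h11 : 1 - r ≤ 1 := by linarith [hr.1]
        calc (1 - r) ^ 3 = (1 - r) * (1 - r) ^ 2 := by ring
          _ ≤ (1 - r) * 1 := by nlinarith
          _ = 1 - r := mul_one _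
      calc |r - B r| ≤ E r * (1 - r) ^ 3 := hb
        _ ≤ E r * (1 - r) := mul_le_mul_of_nonneg_left hc3 (hEnn r)
    have h := hsub.add (tendsto_const_nhds (x := (1:ℝ)))
    simpa using h
  -- quotient of (1 - r^2)/(1 - B r^2) → 1
  have hquot : Tendsto (fun r : ℝ => (1 - r ^ 2) / (1 - B r ^ 2))
      (nhdsWithin 1 (Set.Iio 1)) (nhds 1) := by
    have h1 : Tendsto (fun r : ℝ => (1 - r) / (1 - B r))
        (nhdsWithin 1 (Set.Iio 1)) (nhds 1) := by
      have h := hratio.inv₀ one_ne_zero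
      simpa [inv_div] using h
    have h2 : Tendsto (fun r : ℝ => (1 + r) / (1 + B r))
        (nhdsWithin 1 (Set.Iio 1)) (nhds 1) := by
      have hnum : Tendsto (fun r : ℝ => 1 + r) (nhdsWithin 1 (Set.Iio 1)) (nhds 2) := by
        have hco : Continuous (fun r : ℝ => 1 + r) := continuous_const.add continuous_id
        have := hco.tendsto (1:ℝ)
        norm_num at this
        exact this.mono_left nhdsWithin_le_nhds
      have hden : Tendsto (fun r : ℝ => 1 + B r) (nhdsWithin 1 (Set.Iio 1)) (nhds 2) := by
        have := (tendsto_const_nhds (x := (1:ℝ))).add hB1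
        norm_num at this
        exact this
      have h := hnum.div hden (by norm_num : (2:ℝ) ≠ 0)
      norm_num at h
      exact h
    have h := h1.mul h2
    rw [one_mul] at h
    refine h.congr fun r => ?_
    rw [div_mul_div_comm]
    congr 1 <;> ring
  -- Julia's lemma at τ
  have hjulia : ∀ z ∈ ball (0:ℂ) 1,
      (1 - ‖z‖ ^ 2) / ‖τ - z‖ ^ 2
        ≤ (1 - ‖F z‖ ^ 2) / ‖τ - F z‖ ^ 2 := by
    intro z hzD
    have hz : ‖z‖ < 1 := mem_D.mp hzD
    have hFz : ‖F z‖ < 1 := mem_D.mp (hFself hzD)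
    have hd1 : (0:ℝ) < ‖1 - (starRingEnd ℂ) τ * z‖ := by
      apply norm_pos_iff.mpr
      apply one_sub_ne
      rw [norm_mul, Complex.norm_conj, hτ, one_mul]
      exact hz
    have hd2 : (0:ℝ) < ‖1 - (starRingEnd ℂ) τ * F z‖ := by
      apply norm_pos_iff.mpr
      apply one_sub_ne
      rw [norm_mul, Complex.norm_conj, hτ, one_mul]
      exact hFz
    have hA : Tendsto (fun r : ℝ =>
        (1 - ‖z‖ ^ 2) / ‖1 - (starRingEnd ℂ) ((r:ℂ) * τ) * z‖ ^ 2
          * ((1 - r ^ 2) / (1 - B r ^ 2)))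
        (nhdsWithin 1 (Set.Iio 1))
        (nhds ((1 - ‖z‖ ^ 2) / ‖1 - (starRingEnd ℂ) τ * z‖ ^ 2)) := by
      have hden : Tendsto (fun r : ℝ => ‖1 - (starRingEnd ℂ) ((r:ℂ) * τ) * z‖ ^ 2)
          (nhdsWithin 1 (Set.Iio 1)) (nhds (‖1 - (starRingEnd ℂ) τ * z‖ ^ 2)) := by
        have hcont2 : Continuous (fun w : ℂ =>
            ‖1 - (starRingEnd ℂ) w * z‖ ^ 2) := by
          apply Continuous.pow
          apply continuous_norm.comp
          exact continuous_const.sub ((continuous_conj).mul continuous_const)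
        exact (hcont2.tendsto τ).comp hbase
      have hfac := (tendsto_const_nhds (x := (1 - ‖z‖ ^ 2))).div hden (by positivity)
      have h := hfac.mul hquot
      simpa using h
    have hBf : Tendsto (fun r : ℝ =>
        (1 - ‖F z‖ ^ 2)
          / ‖1 - (starRingEnd ℂ) (F ((r:ℂ) * τ)) * F z‖ ^ 2)
        (nhdsWithin 1 (Set.Iio 1))
        (nhds ((1 - ‖F z‖ ^ 2)
          / ‖1 - (starRingEnd ℂ) τ * F z‖ ^ 2)) := by
      have hcont2 : Continuous (fun w : ℂ =>
          ‖1 - (starRingEnd ℂ) w * F z‖ ^ 2) := by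
        apply Continuous.pow
        apply continuous_norm.comp
        exact continuous_const.sub ((continuous_conj).mul continuous_const)
      have hden := (hcont2.tendsto τ).comp hFτ
      exact (tendsto_const_nhds (x := (1 - ‖F z‖ ^ 2))).div hden (by positivity)
    have hAB : ∀ᶠ r : ℝ in nhdsWithin (1:ℝ) (Set.Iio 1),
        (1 - ‖z‖ ^ 2) / ‖1 - (starRingEnd ℂ) ((r:ℂ) * τ) * z‖ ^ 2
            * ((1 - r ^ 2) / (1 - B r ^ 2))
          ≤ (1 - ‖F z‖ ^ 2)
            / ‖1 - (starRingEnd ℂ) (F ((r:ℂ) * τ)) * F z‖ ^ 2 := by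
      filter_upwards [hIoo] with r hr
      have hrt : ‖(r:ℂ) * τ‖ < 1 := by
        rw [habs_rt r hr.1.le]; exact hr.2
      have hFrt : ‖F ((r:ℂ) * τ)‖ < 1 := hBlt r hr.1.le hr.2
      have hsp := schwarz_pick hF hFself hrt hz
      have e1 := mob_one_sub_sq hrt hz
      have e2 := mob_one_sub_sq hFrt hFz
      have hmono : 1 - ‖mob ((r:ℂ) * τ) z‖ ^ 2
          ≤ 1 - ‖mob (F ((r:ℂ) * τ)) (F z)‖ ^ 2 := by
        nlinarith [norm_nonneg (mob ((r:ℂ) * τ) z),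
          norm_nonneg (mob (F ((r:ℂ) * τ)) (F z)), hsp]
      rw [e1, e2, habs_rt r hr.1.le] at hmono
      have hq1 : (0:ℝ) < ‖1 - (starRingEnd ℂ) ((r:ℂ) * τ) * z‖ ^ 2 := by
        have := norm_pos_iff.mpr (den_ne hrt hz.le)
        positivity
      have hq2 : (0:ℝ) < ‖1 - (starRingEnd ℂ) (F ((r:ℂ) * τ)) * F z‖ ^ 2 := by
        have := norm_pos_iff.mpr (den_ne hFrt hFz.le)
        positivity
      have hBpos : (0:ℝ) < 1 - B r ^ 2 := by
        have := hBlt r hr.1.le hr.2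
        have hBnn : 0 ≤ B r := norm_nonneg _
        nlinarith
      rw [div_le_div_iff₀ hq1 hq2] at hmono
      rw [div_mul_div_comm, div_le_div_iff₀ (by positivity) hq2]
      have hBr : B r = ‖F ((r:ℂ) * τ)‖ := rfl
      rw [← hBr] at hmono
      nlinarith [hmono, hBpos.le, hq2.le]
    have hkey := le_of_tendsto_of_tendsto hA hBf hAB
    rwa [abs_one_sub_conj hτ z, abs_one_sub_conj hτ (F z)] at hkey
  -- the positive real part function
  set p : ℂ → ℂ := fun z => (τ + F z) / (τ - F z) - (τ + z) / (τ - z) with hpdef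
  have hpdiff : DifferentiableOn ℂ p (ball (0:ℂ) 1) := by
    apply DifferentiableOn.sub
    · apply DifferentiableOn.div
      · exact (differentiableOn_const _).add hF
      · exact (differentiableOn_const _).sub hF
      · intro z hz
        exact sub_ne_zero_of_abs_lt hτ (mem_D.mp (hFself hz))
    · apply DifferentiableOn.div
      · exact (differentiableOn_const _).add differentiable_id.differentiableOn
      · exact (differentiableOn_const _).sub differentiable_id.differentiableOn
      · intro z hz
        exact sub_ne_zero_of_abs_lt hτ (mem_D.mp hz)
  have hpre : ∀ z ∈ ball (0:ℂ) 1, 0 ≤ (p z).re := by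
    intro z hz
    rw [hpdef]
    simp only [Complex.sub_re]
    rw [re_quot hτ (mem_D.mp (hFself hz)), re_quot hτ (mem_D.mp hz)]
    have := hjulia z hz
    linarith
  have hp_id : ∀ z ∈ ball (0:ℂ) 1,
      p z = 2 * τ * (F z - z) / ((τ - F z) * (τ - z)) := by
    intro z hz
    have h1 : τ - F z ≠ 0 := sub_ne_zero_of_abs_lt hτ (mem_D.mp (hFself hz))
    have h2 : τ - z ≠ 0 := sub_ne_zero_of_abs_lt hτ (mem_D.mp hz)
    rw [hpdef]
    field_simp
    ring
  -- decay of p along the radius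
  have hdecay : Tendsto (fun r : ℝ => ‖p ((r:ℂ) * τ)‖ / (1 - r))
      (nhdsWithin 1 (Set.Iio 1)) (nhds 0) := by
    have h4E : Tendsto (fun r : ℝ => 4 * E r) (nhdsWithin 1 (Set.Iio 1)) (nhds 0) := by
      have := hE.const_mul (4:ℝ)
      simpa using this
    have hEhalf : ∀ᶠ r in nhdsWithin (1:ℝ) (Set.Iio 1), E r < 1/2 := by
      have : Set.Iio (1/2 : ℝ) ∈ nhds (0:ℝ) := Iio_mem_nhds (by norm_num)
      exact hE this
    refine squeeze_zero' ?_ ?_ h4E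
    · filter_upwards [hIoo] with r hr
      exact div_nonneg (norm_nonneg _) (by linarith [hr.2])
    · filter_upwards [hIoo, hEhalf] with r hr hrE
      have h1r : (0:ℝ) < 1 - r := by linarith [hr.2]
      have hrtD' := hrtD r hr.1.le hr.2
      have h1 : τ - F ((r:ℂ) * τ) ≠ 0 :=
        sub_ne_zero_of_abs_lt hτ (mem_D.mp (hFself hrtD'))
      have h2 : τ - (r:ℂ) * τ ≠ 0 := by
        intro h
        have := habs_sub r hr.2
        rw [norm_sub_rev] at this
        rw [h] at this
        simp at this
        linarith
      have habs2 : ‖τ - (r:ℂ) * τ‖ = 1 - r := by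
        rw [norm_sub_rev]; exact habs_sub r hr.2
      set m : ℝ := ‖τ - F ((r:ℂ) * τ)‖ with hmdef
      have hm0 : 0 < m := norm_pos_iff.mpr h1
      -- lower bound on m
      have hmlb : (1 - r) / 2 ≤ m := by
        have htri : ‖τ - (r:ℂ) * τ‖
            ≤ m + ‖F ((r:ℂ) * τ) - (r:ℂ) * τ‖ := by
          have := norm_sub_le_norm_sub_add_norm_sub τ (F ((r:ℂ) * τ)) ((r:ℂ) * τ)
          exact this
        rw [habs2, hFest r hr] at htri
        have h01 : (0:ℝ) ≤ 1 - r := by linarith [hr.2]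
        have hc3 : (1 - r) ^ 3 ≤ 1 - r := by nlinarith [hr.1, hr.2, sq_nonneg (1 - r)]
        have hEb : E r * (1 - r) ^ 3 ≤ (1/2) * (1 - r) :=
          mul_le_mul hrE.le hc3 (by positivity) (by norm_num)
        linarith
      -- the value of |p (rτ)|
      have hpv : ‖p ((r:ℂ) * τ)‖ = 2 * (E r * (1 - r) ^ 3) / (m * (1 - r)) := by
        rw [hp_id _ hrtD', norm_div, norm_mul, norm_mul, norm_mul, hτ, habs2,
          hFest r hr, hmdef]
        norm_num
      rw [hpv, div_div, div_le_iff₀ (mul_pos (mul_pos hm0 h1r) h1r)]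
      have hnn : (0:ℝ) ≤ 4 * E r * (1 - r) ^ 2 :=
        mul_nonneg (mul_nonneg (by norm_num) (hEnn r)) (sq_nonneg _)
      nlinarith [mul_le_mul_of_nonneg_left hmlb hnn]
  -- p vanishes
  have hpzero := pos_re_vanish hpdiff hpre hτ hdecay
  intro z hzD
  have hz := mem_D.mp hzD
  have hFz := mem_D.mp (hFself hzD)
  have h0 := hpzero z hzD
  rw [hp_id z hzD] at h0
  have h1 : τ - F z ≠ 0 := sub_ne_zero_of_abs_lt hτ hFz
  have h2 : τ - z ≠ 0 := sub_ne_zero_of_abs_lt hτ hz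
  rcases div_eq_zero_iff.mp h0 with h3 | h3
  · have h4 : F z - z = 0 := by
      rcases mul_eq_zero.mp h3 with h5 | h5
      · rcases mul_eq_zero.mp h5 with h6 | h6
        · norm_num at h6
        · exact absurd h6 hτ0
      · exact h5
    exact sub_eq_zero.mp h4
  · exact absurd h3 (mul_ne_zero h1 h2)
end

section
/- Let p : Δ → ℂ be holomorphic with Re p(z) ≥ 0 for all z ∈ Δ. Then both g(z) = −(1 − z)²·p(z) and g₁(z) = z·p(z) are infinitesimal generators of one-parameter continuous semigroups of holomorphic self-maps of Δ. -/
open Filter Metric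

/-- `g : ℂ → ℂ` is the infinitesimal generator of a one-parameter continuous
semigroup of holomorphic self-maps of the open unit disk `Δ = ball 0 1`. -/
def IsGenOnDisk (g : ℂ → ℂ) : Prop :=
  ∃ F : ℝ → ℂ → ℂ,
    (∀ t : ℝ, 0 ≤ t → DifferentiableOn ℂ (F t) (ball (0 : ℂ) 1) ∧
      Set.MapsTo (F t) (ball (0 : ℂ) 1) (ball (0 : ℂ) 1)) ∧
    (∀ t s : ℝ, 0 ≤ t → 0 ≤ s → ∀ z ∈ ball (0 : ℂ) 1, F (t + s) z = F t (F s z)) ∧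
    (∀ z ∈ ball (0 : ℂ) 1,
      Tendsto (fun t : ℝ => F t z) (nhdsWithin 0 (Set.Ioi 0)) (nhds z)) ∧
    (∀ z ∈ ball (0 : ℂ) 1,
      Tendsto (fun t : ℝ => (z - F t z) / (t : ℂ)) (nhdsWithin 0 (Set.Ioi 0)) (nhds (g z)))

namespace BPAux

open Set MeasureTheory intervalIntegral Complex
open scoped NNReal

/-- A solution curve of `y' = G ∘ y` on `[0, b]`, staying in the unit disk. -/
def SolOn (G : ℂ → ℂ) (z : ℂ) (y : ℝ → ℂ) (b : ℝ) : Prop :=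
  ContinuousOn y (Icc 0 b) ∧ (∀ t ∈ Icc (0:ℝ) b, ‖y t‖ < 1) ∧
    ∀ t ∈ Icc (0:ℝ) b, y t = z + ∫ s in (0:ℝ)..t, G (y s)

variable {G : ℂ → ℂ} {c : ℝ} {z : ℂ} {y : ℝ → ℂ} {b : ℝ}

lemma SolOn.y0 (h : SolOn G z y b) (hb : 0 ≤ b) : y 0 = z := by
  have := h.2.2 0 ⟨le_rfl, hb⟩
  simpa using this

lemma SolOn.integrand_cont (hGc : ContinuousOn G (ball (0:ℂ) 1)) (h : SolOn G z y b) :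
    ContinuousOn (fun s => G (y s)) (Icc 0 b) := by
  refine hGc.comp h.1 (fun t ht => ?_)
  simpa [mem_ball_zero_iff] using h.2.1 t ht

lemma SolOn.hasDerivWithinAt (hGc : ContinuousOn G (ball (0:ℂ) 1)) (h : SolOn G z y b)
    {t : ℝ} (ht : t ∈ Ico 0 b) : HasDerivWithinAt y (G (y t)) (Ici t) t := by
  have hfc : ContinuousOn (fun s => G (y s)) (Icc 0 b) := h.integrand_cont hGc
  have hsub : Icc (0:ℝ) t ⊆ Icc 0 b := Icc_subset_Icc le_rfl ht.2.le
  have hInt : IntervalIntegrable (fun s => G (y s)) volume 0 t :=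
    (hfc.mono (by rw [uIcc_of_le ht.1]; exact hsub)).intervalIntegrable
  have hIco : Ico t b ∈ nhdsWithin t (Ici t) := by
    have : Ico t b = Ici t ∩ Iio b := (Ici_inter_Iio).symm
    rw [this]
    exact inter_mem self_mem_nhdsWithin (mem_nhdsWithin_of_mem_nhds (Iio_mem_nhds ht.2))
  have hIcosub : Ico t b ⊆ Icc 0 b := fun s hs => ⟨le_trans ht.1 hs.1, hs.2.le⟩
  have hIoo : Ioo t b ∈ nhdsWithin t (Ioi t) := by
    have : Ioo t b = Ioi t ∩ Iio b := (Ioi_inter_Iio).symm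
    rw [this]
    exact inter_mem self_mem_nhdsWithin (mem_nhdsWithin_of_mem_nhds (Iio_mem_nhds ht.2))
  have hmeas : StronglyMeasurableAtFilter (fun s => G (y s)) (nhdsWithin t (Ioi t)) := by
    refine ⟨Ioo t b, hIoo, ?_⟩
    exact (hfc.mono (Ioo_subset_Icc_self.trans (Icc_subset_Icc ht.1 le_rfl))).aestronglyMeasurable
      measurableSet_Ioo
  have hcw : ContinuousWithinAt (fun s => G (y s)) (Ioi t) t := by
    have h1 : ContinuousWithinAt (fun s => G (y s)) (Icc 0 b) t := hfc t ⟨ht.1, ht.2.le⟩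
    exact h1.mono_of_mem_nhdsWithin
      (mem_of_superset hIoo (Ioo_subset_Icc_self.trans (Icc_subset_Icc ht.1 le_rfl)))
  have hprim : HasDerivWithinAt (fun u => z + ∫ s in (0:ℝ)..u, G (y s)) (G (y t)) (Ici t) t :=
    (integral_hasDerivWithinAt_right hInt hmeas hcw).const_add z
  refine hprim.congr_of_eventuallyEq ?_ (h.2.2 t ⟨ht.1, ht.2.le⟩)
  exact eventually_of_mem hIco (fun s hs => h.2.2 s ⟨le_trans ht.1 hs.1, hs.2.le⟩)

lemma SolOn.hasDerivAt (hGc : ContinuousOn G (ball (0:ℂ) 1)) (h : SolOn G z y b)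
    {t : ℝ} (ht : t ∈ Ioo 0 b) : HasDerivAt y (G (y t)) t := by
  have hfc : ContinuousOn (fun s => G (y s)) (Icc 0 b) := h.integrand_cont hGc
  have hnb : Icc (0:ℝ) b ∈ nhds t := Icc_mem_nhds ht.1 ht.2
  have hInt : IntervalIntegrable (fun s => G (y s)) volume 0 t :=
    (hfc.mono (by rw [uIcc_of_le ht.1.le]; exact Icc_subset_Icc le_rfl ht.2.le)).intervalIntegrable
  have hmeas : StronglyMeasurableAtFilter (fun s => G (y s)) (nhds t) :=
    ⟨Icc 0 b, hnb, hfc.aestronglyMeasurable measurableSet_Icc⟩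
  have hca : ContinuousAt (fun s => G (y s)) t := (hfc t ⟨ht.1.le, ht.2.le⟩).continuousAt hnb
  have hprim : HasDerivAt (fun u => z + ∫ s in (0:ℝ)..u, G (y s)) (G (y t)) t :=
    (integral_hasDerivAt_right hInt hmeas hca).const_add z
  refine hprim.congr_of_eventuallyEq ?_
  exact eventually_of_mem hnb (fun s hs => h.2.2 s hs)

/-- Lyapunov estimate: the quantity `1 - ‖y t‖²` decays at most exponentially. -/
lemma SolOn.lyap (hGc : ContinuousOn G (ball (0:ℂ) 1)) (hc : 0 ≤ c)
    (hLyap : ∀ w ∈ ball (0:ℂ) 1, 2 * ((starRingEnd ℂ) w * G w).re ≤ c * (1 - normSq w))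
    (h : SolOn G z y b) :
    ∀ t ∈ Icc (0:ℝ) b, (1 - normSq z) * Real.exp (-(c * t)) ≤ 1 - normSq (y t) := by
  intro t ht
  have hb : 0 ≤ b := le_trans ht.1 ht.2
  set u : ℝ → ℝ := fun t => (1 - normSq (y t)) * Real.exp (c * t) with hu
  have hucont : ContinuousOn u (Icc 0 b) :=
    (continuousOn_const.sub (Complex.continuous_normSq.comp_continuousOn h.1)).mul
      (Real.continuous_exp.comp (continuous_const.mul continuous_id)).continuousOn
  have hD : ∀ x ∈ Ioo (0:ℝ) b, HasDerivAt u
      (Real.exp (c * x) * (c * (1 - normSq (y x)) -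
        2 * ((y x).re * (G (y x)).re + (y x).im * (G (y x)).im))) x := by
    intro x hx
    have hyd := h.hasDerivAt hGc hx
    have hre : HasDerivAt (fun t => (y t).re) ((G (y x)).re) x :=
      Complex.reCLM.hasFDerivAt.comp_hasDerivAt x hyd
    have him : HasDerivAt (fun t => (y t).im) ((G (y x)).im) x :=
      Complex.imCLM.hasFDerivAt.comp_hasDerivAt x hyd
    have hnsq : HasDerivAt (fun t => normSq (y t))
        ((G (y x)).re * (y x).re + (y x).re * (G (y x)).re +
          ((G (y x)).im * (y x).im + (y x).im * (G (y x)).im)) x := by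
      have h2 := (hre.mul hre).add (him.mul him)
      simpa only [Complex.normSq_apply, Pi.mul_def, Pi.add_def] using h2
    have hexp : HasDerivAt (fun t => Real.exp (c * t)) (Real.exp (c * x) * c) x := by
      have h3 : HasDerivAt (fun t : ℝ => c * t) c x := by
        simpa using (hasDerivAt_id x).const_mul c
      exact h3.exp
    have h4 := ((hasDerivAt_const x (1:ℝ)).sub hnsq).mul hexp
    simp only [Pi.mul_def, Pi.sub_def] at h4
    refine h4.congr_deriv ?_
    ring
  have hmono : MonotoneOn u (Icc 0 b) := by
    refine monotoneOn_of_deriv_nonneg (convex_Icc _ _) hucont ?_ ?_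
    · intro x hx; rw [interior_Icc] at hx
      exact (hD x hx).differentiableAt.differentiableWithinAt
    · intro x hx; rw [interior_Icc] at hx
      rw [(hD x hx).deriv]
      have hmem : y x ∈ ball (0:ℂ) 1 := mem_ball_zero_iff.2 (h.2.1 x ⟨hx.1.le, hx.2.le⟩)
      have hL := hLyap (y x) hmem
      have hre2 : ((starRingEnd ℂ) (y x) * G (y x)).re =
          (y x).re * (G (y x)).re + (y x).im * (G (y x)).im := by
        simp [Complex.mul_re]
      refine mul_nonneg (Real.exp_pos _).le ?_
      rw [hre2] at hL; linarith
  have h0mem : (0:ℝ) ∈ Icc (0:ℝ) b := ⟨le_rfl, hb⟩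
  have h0t := hmono h0mem ht ht.1
  have hy0 : y 0 = z := h.y0 hb
  have hgoal : (1 - normSq z) * Real.exp (-(c * t)) =
      u 0 * Real.exp (-(c * t)) := by simp [hu, hy0]
  rw [hgoal]
  calc u 0 * Real.exp (-(c * t)) ≤ u t * Real.exp (-(c * t)) :=
        mul_le_mul_of_nonneg_right h0t (Real.exp_nonneg _)
    _ = 1 - normSq (y t) := by
        rw [hu]; simp only [mul_assoc, ← Real.exp_add]
        simp

lemma SolOn.mono (h : SolOn G z y b) {b' : ℝ} (hb' : b' ≤ b) : SolOn G z y b' :=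
  ⟨h.1.mono (Icc_subset_Icc le_rfl hb'), fun t ht => h.2.1 t ⟨ht.1, ht.2.trans hb'⟩,
    fun t ht => h.2.2 t ⟨ht.1, ht.2.trans hb'⟩⟩

lemma ball_subset' {q : ℝ} (hq : q < 1) : closedBall (0:ℂ) q ⊆ ball (0:ℂ) 1 :=
  fun w hw => lt_of_le_of_lt (mem_closedBall_zero_iff.1 hw) hq |> fun h => mem_ball_zero_iff.2 h

lemma exists_bound (hGc : ContinuousOn G (ball (0:ℂ) 1)) {q : ℝ} (hq : q < 1) :
    ∃ M : ℝ, 0 < M ∧ ∀ w ∈ closedBall (0:ℂ) q, ‖G w‖ ≤ M := by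
  rcases lt_or_ge q 0 with hq0 | hq0
  · exact ⟨1, one_pos, fun w hw => absurd hw (by simp [closedBall_eq_empty.2 hq0])⟩
  · have hKsub : closedBall (0:ℂ) q ⊆ ball (0:ℂ) 1 := ball_subset' hq
    have hc : ContinuousOn (fun w => ‖G w‖) (closedBall (0:ℂ) q) :=
      (hGc.mono hKsub).norm
    obtain ⟨w₀, _, hw₀⟩ := (isCompact_closedBall (0:ℂ) q).exists_isMaxOn
      ⟨0, by simpa using hq0⟩ hc
    exact ⟨‖G w₀‖ + 1, by positivity, fun w hw => (hw₀ hw).trans (by linarith)⟩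

lemma exists_lip (hG : DifferentiableOn ℂ G (ball (0:ℂ) 1)) {q : ℝ} (hq : q < 1) :
    ∃ L : ℝ≥0, 0 < L ∧ LipschitzOnWith L G (closedBall (0:ℂ) q) := by
  rcases lt_or_ge q 0 with hq0 | hq0
  · exact ⟨1, one_pos, by rw [closedBall_eq_empty.2 hq0]; exact lipschitzOnWith_empty 1 G⟩
  · have hKsub : closedBall (0:ℂ) q ⊆ ball (0:ℂ) 1 := ball_subset' hq
    have hd : ContinuousOn (deriv G) (ball (0:ℂ) 1) :=
      ((hG.analyticOnNhd isOpen_ball).deriv).continuousOn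
    have hc : ContinuousOn (fun w => ‖deriv G w‖₊) (closedBall (0:ℂ) q) :=
      (hd.mono hKsub).nnnorm
    obtain ⟨w₀, _, hw₀⟩ := (isCompact_closedBall (0:ℂ) q).exists_isMaxOn
      ⟨0, by simpa using hq0⟩ hc
    refine ⟨‖deriv G w₀‖₊ + 1, by positivity, ?_⟩
    refine Convex.lipschitzOnWith_of_nnnorm_deriv_le (fun x hx => ?_) (fun x hx => ?_)
      (convex_closedBall _ _)
    · exact hG.differentiableAt (isOpen_ball.mem_nhds (hKsub hx))
    · exact (hw₀ hx).trans le_self_add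

/-- Uniqueness of solution curves. -/
lemma sol_unique (hG : DifferentiableOn ℂ G (ball (0:ℂ) 1)) (hc : 0 ≤ c)
    (hLyap : ∀ w ∈ ball (0:ℂ) 1, 2 * ((starRingEnd ℂ) w * G w).re ≤ c * (1 - normSq w))
    {y₁ y₂ : ℝ → ℂ} (hb : 0 ≤ b)
    (h₁ : SolOn G z y₁ b) (h₂ : SolOn G z y₂ b) :
    ∀ t ∈ Icc (0:ℝ) b, y₁ t = y₂ t := by
  have hGc : ContinuousOn G (ball (0:ℂ) 1) := hG.continuousOn
  have hz1 : normSq z < 1 := by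
    have h5 := h₁.2.1 0 ⟨le_rfl, hb⟩
    rw [h₁.y0 hb] at h5
    have : ‖z‖ < 1 := by exact h5
    nlinarith [Complex.sq_norm z, norm_nonneg z]
  set qsq : ℝ := 1 - (1 - normSq z) * Real.exp (-(c * b)) with hqsq
  set q : ℝ := Real.sqrt qsq with hqdef
  have hexp1 : Real.exp (-(c * b)) ≤ 1 := Real.exp_le_one_iff.2 (by nlinarith)
  have hqsq0 : 0 ≤ qsq := by nlinarith [Real.exp_pos (-(c * b)), Complex.normSq_nonneg z]
  have hqsq1 : qsq < 1 := by nlinarith [Real.exp_pos (-(c * b))]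
  have hq1 : q < 1 := by
    rw [hqdef]
    calc Real.sqrt qsq < Real.sqrt 1 := Real.sqrt_lt_sqrt hqsq0 hqsq1
      _ = 1 := Real.sqrt_one
  have hmem : ∀ (y' : ℝ → ℂ), SolOn G z y' b → ∀ s ∈ Icc (0:ℝ) b,
      y' s ∈ closedBall (0:ℂ) q := by
    intro y' hy' s hs
    have hl := hy'.lyap hGc hc hLyap s hs
    have h2 : (1 - normSq z) * Real.exp (-(c * b)) ≤ 1 - normSq (y' s) := by
      refine le_trans (mul_le_mul_of_nonneg_left ?_ (by nlinarith)) hl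
      exact Real.exp_le_exp.2 (by nlinarith [hs.1, hs.2])
    have h3 : normSq (y' s) ≤ qsq := by rw [hqsq]; linarith
    rw [mem_closedBall_zero_iff, Complex.norm_def]
    exact Real.sqrt_le_sqrt h3
  obtain ⟨L, _, hL⟩ := exists_lip hG hq1
  intro t ht
  exact ODE_solution_unique_of_mem_Icc_right (v := fun _ w => G w)
    (s := fun _ => closedBall (0:ℂ) q) (fun _ _ => hL)
    h₁.1 (fun s hs => h₁.hasDerivWithinAt hGc hs)
    (fun s hs => hmem y₁ h₁ s (Ico_subset_Icc_self hs))
    h₂.1 (fun s hs => h₂.hasDerivWithinAt hGc hs)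
    (fun s hs => hmem y₂ h₂ s (Ico_subset_Icc_self hs))
    (by rw [h₁.y0 hb, h₂.y0 hb]) ht

/-- Local existence: Picard iteration, giving a holomorphic-in-`z` local flow. -/
lemma loc (hG : DifferentiableOn ℂ G (ball (0:ℂ) 1)) {ρ ρ' : ℝ}
    (hρ0 : 0 < ρ) (hρ : ρ < ρ') (hρ'1 : ρ' < 1) :
    ∃ T : ℝ, 0 < T ∧ ∃ Φ : ℝ → ℂ → ℂ,
      (∀ z ∈ ball (0:ℂ) ρ,
        ContinuousOn (fun t => Φ t z) (Icc 0 T) ∧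
        (∀ t ∈ Icc (0:ℝ) T, Φ t z = z + ∫ s in (0:ℝ)..t, G (Φ s z)) ∧
        (∀ t ∈ Icc (0:ℝ) T, ‖Φ t z - z‖ ≤ ρ' - ρ)) ∧
      (∀ t ∈ Icc (0:ℝ) T, DifferentiableOn ℂ (fun z => Φ t z) (ball (0:ℂ) ρ)) := by
  have hGc : ContinuousOn G (ball (0:ℂ) 1) := hG.continuousOn
  obtain ⟨M, hM0, hM⟩ := exists_bound hGc hρ'1
  obtain ⟨L, hL0, hL⟩ := exists_lip hG hρ'1
  have hL0' : (0:ℝ) < L := hL0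
  set δ : ℝ := ρ' - ρ with hδdef
  have hδ0 : 0 < δ := by rw [hδdef]; linarith
  set T : ℝ := min (δ / M) (1 / (2 * L)) with hTdef
  have hT0 : 0 < T := lt_min (by positivity) (by positivity)
  have hMT : M * T ≤ δ := by
    calc M * T ≤ M * (δ / M) := mul_le_mul_of_nonneg_left (min_le_left _ _) hM0.le
      _ = δ := by field_simp
  have hLT : (L:ℝ) * T ≤ 1 / 2 := by
    calc (L:ℝ) * T ≤ L * (1 / (2 * L)) :=
          mul_le_mul_of_nonneg_left (min_le_right _ _) L.coe_nonneg
      _ = 1 / 2 := by field_simp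
  refine ⟨T, hT0, ?_⟩
  set Φ : ℕ → ℝ → ℂ → ℂ := fun n => Nat.rec (fun _ z => z)
    (fun _ Φn t z => z + ∫ s in (0:ℝ)..t, G (Φn s z)) n with hΦdef
  have hΦs : ∀ n t z, Φ (n+1) t z = z + ∫ s in (0:ℝ)..t, G (Φ n s z) := fun _ _ _ => rfl
  -- main induction
  have key : ∀ n : ℕ,
      (∀ z ∈ ball (0:ℂ) ρ, ∀ t ∈ Icc (0:ℝ) T, ‖Φ n t z - z‖ ≤ M * t) ∧
      (∀ z ∈ ball (0:ℂ) ρ, ContinuousOn (fun t => Φ n t z) (Icc 0 T)) ∧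
      (∀ t ∈ Icc (0:ℝ) T, LipschitzOnWith 2 (fun z => Φ n t z) (ball (0:ℂ) ρ)) ∧
      (∀ z₀ ∈ ball (0:ℂ) ρ, ∃ D : ℝ → ℂ, ContinuousOn D (Icc 0 T) ∧
          ∀ t ∈ Icc (0:ℝ) T, HasDerivAt (fun z => Φ n t z) (D t) z₀) := by
    intro n
    induction n with
    | zero =>
      refine ⟨fun z _ t ht => by
        show ‖z - z‖ ≤ M * t
        simpa using mul_nonneg hM0.le ht.1,
        fun z _ => continuousOn_const,
        fun t _ => (LipschitzWith.id.weaken one_le_two).lipschitzOnWith,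
        fun z₀ _ => ⟨fun _ => 1, continuousOn_const, fun t _ => hasDerivAt_id z₀⟩⟩
    | succ n ih =>
      obtain ⟨ih1, ih2, ih3, ih4⟩ := ih
      have hmem : ∀ z ∈ ball (0:ℂ) ρ, ∀ s ∈ Icc (0:ℝ) T,
          Φ n s z ∈ closedBall (0:ℂ) ρ' ∧ Φ n s z ∈ ball (0:ℂ) 1 := by
        intro z hz s hs
        have h1 := ih1 z hz s hs
        have h3 : ‖z‖ < ρ := mem_ball_zero_iff.1 hz
        have h2 : ‖Φ n s z‖ ≤ ‖z‖ + M * s := by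
          calc ‖Φ n s z‖ = ‖(Φ n s z - z) + z‖ := by ring_nf
            _ ≤ ‖Φ n s z - z‖ + ‖z‖ := norm_add_le _ _
            _ ≤ M * s + ‖z‖ := by linarith
            _ = ‖z‖ + M * s := by ring
        have h4 : M * s ≤ δ := le_trans (mul_le_mul_of_nonneg_left hs.2 hM0.le) hMT
        have h5 : ‖Φ n s z‖ ≤ ρ' := by rw [hδdef] at h4; linarith
        exact ⟨mem_closedBall_zero_iff.2 h5, mem_ball_zero_iff.2 (lt_of_le_of_lt h5 hρ'1)⟩
      have hcontInt : ∀ z ∈ ball (0:ℂ) ρ, ContinuousOn (fun s => G (Φ n s z)) (Icc 0 T) :=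
        fun z hz => hGc.comp (ih2 z hz) (fun s hs => (hmem z hz s hs).2)
      have hIntOn : ∀ z ∈ ball (0:ℂ) ρ, ∀ t ∈ Icc (0:ℝ) T,
          IntervalIntegrable (fun s => G (Φ n s z)) volume 0 t := by
        intro z hz t ht
        exact ((hcontInt z hz).mono
          (by rw [uIcc_of_le ht.1]; exact Icc_subset_Icc le_rfl ht.2)).intervalIntegrable
      refine ⟨?_, ?_, ?_, ?_⟩
      · -- (i) norm bound
        intro z hz t ht
        rw [hΦs]
        simp only [add_sub_cancel_left]
        refine le_trans (intervalIntegral.norm_integral_le_of_norm_le_const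
          (C := M) ?_) (le_of_eq (by rw [sub_zero, _root_.abs_of_nonneg ht.1]))
        intro s hs
        rw [uIoc_of_le ht.1] at hs
        exact hM _ ((hmem z hz s ⟨hs.1.le, hs.2.trans ht.2⟩).1)
      · -- (ii) continuity in t
        intro z hz
        have h6 : IntegrableOn (fun s => G (Φ n s z)) (Set.uIcc 0 T) volume := by
          rw [uIcc_of_le hT0.le]
          exact (hcontInt z hz).integrableOn_compact isCompact_Icc
        have h7 := intervalIntegral.continuousOn_primitive_interval (f := fun s => G (Φ n s z))
          (a := 0) (b := T) (μ := volume) h6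
        rw [uIcc_of_le hT0.le] at h7
        exact continuousOn_const.add h7
      · -- (iii) Lipschitz in z
        intro t ht
        refine LipschitzOnWith.of_dist_le_mul ?_
        intro z hz w hw
        rw [dist_eq_norm, dist_eq_norm, hΦs, hΦs]
        have hdiff : z + (∫ s in (0:ℝ)..t, G (Φ n s z)) - (w + ∫ s in (0:ℝ)..t, G (Φ n s w))
            = (z - w) + ((∫ s in (0:ℝ)..t, G (Φ n s z)) - ∫ s in (0:ℝ)..t, G (Φ n s w)) := by
          ring
        rw [hdiff]
        have hsub : (∫ s in (0:ℝ)..t, G (Φ n s z)) - ∫ s in (0:ℝ)..t, G (Φ n s w)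
            = ∫ s in (0:ℝ)..t, (G (Φ n s z) - G (Φ n s w)) :=
          (intervalIntegral.integral_sub (hIntOn z hz t ht) (hIntOn w hw t ht)).symm
        have hbnd : ‖∫ s in (0:ℝ)..t, (G (Φ n s z) - G (Φ n s w))‖
            ≤ ((L:ℝ) * (2 * ‖z - w‖)) * t := by
          refine le_trans (intervalIntegral.norm_integral_le_of_norm_le_const
            (C := (L:ℝ) * (2 * ‖z - w‖)) ?_) (le_of_eq (by rw [sub_zero, _root_.abs_of_nonneg ht.1]))
          intro s hs
          rw [uIoc_of_le ht.1] at hs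
          have hsT : s ∈ Icc (0:ℝ) T := ⟨hs.1.le, hs.2.trans ht.2⟩
          have hlip := hL.dist_le_mul (Φ n s z) (hmem z hz s hsT).1 (Φ n s w) (hmem w hw s hsT).1
          have hlip2 := (ih3 s hsT).dist_le_mul z hz w hw
          rw [dist_eq_norm] at hlip hlip2
          calc ‖G (Φ n s z) - G (Φ n s w)‖ ≤ (L:ℝ) * dist (Φ n s z) (Φ n s w) := by
                exact hlip
            _ ≤ (L:ℝ) * (2 * ‖z - w‖) := by
                refine mul_le_mul_of_nonneg_left ?_ L.coe_nonneg
                rw [dist_eq_norm]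
                simpa [dist_eq_norm] using hlip2
        have hLt2 : (L:ℝ) * (2 * ‖z - w‖) * t ≤ ‖z - w‖ := by
          have h8 : (L:ℝ) * t ≤ 1/2 := le_trans
            (mul_le_mul_of_nonneg_left ht.2 L.coe_nonneg) hLT
          nlinarith [norm_nonneg (z - w), L.coe_nonneg, ht.1]
        calc ‖z - w + ((∫ s in (0:ℝ)..t, G (Φ n s z)) - ∫ s in (0:ℝ)..t, G (Φ n s w))‖
            ≤ ‖z - w‖ + ‖(∫ s in (0:ℝ)..t, G (Φ n s z)) - ∫ s in (0:ℝ)..t, G (Φ n s w)‖ :=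
              norm_add_le _ _
          _ ≤ ‖z - w‖ + ‖z - w‖ := by rw [hsub]; linarith [hbnd.trans hLt2]
          _ = ((2:ℝ≥0):ℝ) * ‖z - w‖ := by push_cast; ring
      · -- (iv) holomorphy data
        intro z₀ hz₀
        obtain ⟨D, hDc, hD⟩ := ih4 z₀ hz₀
        set F' : ℝ → ℂ := fun s => deriv G (Φ n s z₀) * D s with hF'def
        have hderivGc : ContinuousOn (deriv G) (ball (0:ℂ) 1) :=
          ((hG.analyticOnNhd isOpen_ball).deriv).continuousOn
        have hF'c : ContinuousOn F' (Icc 0 T) :=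
          (hderivGc.comp (ih2 z₀ hz₀) (fun s hs => (hmem z₀ hz₀ s hs).2)).mul hDc
        have hε : 0 < ρ - ‖z₀‖ := by
          have := mem_ball_zero_iff.1 hz₀; linarith
        have hballsub : ball z₀ (ρ - ‖z₀‖) ⊆ ball (0:ℂ) ρ := by
          intro x hx
          rw [mem_ball] at hx ⊢
          calc dist x 0 ≤ dist x z₀ + dist z₀ 0 := dist_triangle _ _ _
            _ < (ρ - ‖z₀‖) + ‖z₀‖ := by
                rw [dist_zero_right]
                exact add_lt_add_of_lt_of_le hx le_rfl
            _ = ρ := by ring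
        have hkey : ∀ t ∈ Icc (0:ℝ) T, HasDerivAt
            (fun x => ∫ s in (0:ℝ)..t, G (Φ n s x)) (∫ s in (0:ℝ)..t, F' s) z₀ := by
          intro t ht
          have hIsub : Set.uIoc (0:ℝ) t ⊆ Icc (0:ℝ) T := by
            rw [uIoc_of_le ht.1]
            exact fun s hs => ⟨hs.1.le, hs.2.trans ht.2⟩
          have hres := intervalIntegral.hasDerivAt_integral_of_dominated_loc_of_lip
            (F := fun x s => G (Φ n s x)) (F' := F') (x₀ := z₀) (a := 0) (b := t)
            (μ := volume) (bound := fun _ => ((L:ℝ) * 2)) (s := ball z₀ (ρ - ‖z₀‖)) (ball_mem_nhds z₀ hε) ?_ ?_ ?_ ?_ ?_ ?_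
          · exact hres.2
          · -- measurability of F x
            filter_upwards [isOpen_ball.mem_nhds (mem_ball_self hε)] with x hx
            exact ((hcontInt x (hballsub hx)).aestronglyMeasurable
              measurableSet_Icc).mono_measure (Measure.restrict_mono hIsub le_rfl)
          · exact hIntOn z₀ hz₀ t ht
          · exact ((hF'c).aestronglyMeasurable measurableSet_Icc).mono_measure
              (Measure.restrict_mono hIsub le_rfl)
          · -- Lipschitz in x
            refine Filter.Eventually.of_forall (fun s => fun hs => ?_)
            have hsT := hIsub hs
            have hcomp : LipschitzOnWith (L * 2) (fun x => G (Φ n s x)) (ball z₀ (ρ - ‖z₀‖)) := by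
              refine LipschitzOnWith.comp (hL) (((ih3 s hsT).mono hballsub)) ?_
              intro x hx
              exact (hmem x (hballsub hx) s hsT).1
            have hcast : ((Real.nnabs ((L:ℝ) * 2)) : ℝ≥0) = L * 2 := by
              ext
              simp [Real.coe_nnabs, _root_.abs_of_nonneg (by positivity : (0:ℝ) ≤ (L:ℝ) * 2)]
            rw [hcast]
            exact hcomp
          · exact intervalIntegrable_const
          · -- differentiability in x
            refine Filter.Eventually.of_forall (fun s => fun hs => ?_)
            have hsT := hIsub hs
            have hw : Φ n s z₀ ∈ ball (0:ℂ) 1 := (hmem z₀ hz₀ s hsT).2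
            have hGd : HasDerivAt G (deriv G (Φ n s z₀)) (Φ n s z₀) :=
              (hG.differentiableAt (isOpen_ball.mem_nhds hw)).hasDerivAt
            exact hGd.comp z₀ (hD s hsT)
        refine ⟨fun t => 1 + ∫ s in (0:ℝ)..t, F' s, ?_, ?_⟩
        · have h6 : IntegrableOn F' (Set.uIcc 0 T) volume := by
            rw [uIcc_of_le hT0.le]
            exact hF'c.integrableOn_compact isCompact_Icc
          have h7 := intervalIntegral.continuousOn_primitive_interval (f := F')
            (a := 0) (b := T) (μ := volume) h6
          rw [uIcc_of_le hT0.le] at h7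
          exact continuousOn_const.add h7
        · intro t ht
          exact (hasDerivAt_id z₀).add (hkey t ht)
  have hmemN : ∀ n : ℕ, ∀ z ∈ ball (0:ℂ) ρ, ∀ s ∈ Icc (0:ℝ) T,
      Φ n s z ∈ closedBall (0:ℂ) ρ' ∧ Φ n s z ∈ ball (0:ℂ) 1 := by
    intro n z hz s hs
    have h1 := (key n).1 z hz s hs
    have h3 : ‖z‖ < ρ := mem_ball_zero_iff.1 hz
    have h2 : ‖Φ n s z‖ ≤ ‖z‖ + M * s := by
      calc ‖Φ n s z‖ = ‖(Φ n s z - z) + z‖ := by ring_nf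
        _ ≤ ‖Φ n s z - z‖ + ‖z‖ := norm_add_le _ _
        _ ≤ ‖z‖ + M * s := by linarith
    have h4 : M * s ≤ δ := le_trans (mul_le_mul_of_nonneg_left hs.2 hM0.le) hMT
    have h5 : ‖Φ n s z‖ ≤ ρ' := by rw [hδdef] at h4; linarith
    exact ⟨mem_closedBall_zero_iff.2 h5, mem_ball_zero_iff.2 (lt_of_le_of_lt h5 hρ'1)⟩
  have hcontIntN : ∀ n : ℕ, ∀ z ∈ ball (0:ℂ) ρ,
      ContinuousOn (fun s => G (Φ n s z)) (Icc 0 T) :=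
    fun n z hz => hGc.comp ((key n).2.1 z hz) (fun s hs => (hmemN n z hz s hs).2)
  have hIntN : ∀ n : ℕ, ∀ z ∈ ball (0:ℂ) ρ, ∀ t ∈ Icc (0:ℝ) T,
      IntervalIntegrable (fun s => G (Φ n s z)) volume 0 t := by
    intro n z hz t ht
    exact ((hcontIntN n z hz).mono
      (by rw [uIcc_of_le ht.1]; exact Icc_subset_Icc le_rfl ht.2)).intervalIntegrable
  -- convergence of the iteration
  have hdist : ∀ n : ℕ, ∀ z ∈ ball (0:ℂ) ρ, ∀ t ∈ Icc (0:ℝ) T,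
      ‖Φ (n+1) t z - Φ n t z‖ ≤ (M * T) * (1/2)^n := by
    intro n
    induction n with
    | zero =>
      intro z hz t ht
      have h1 := (key 1).1 z hz t ht
      simpa using (show ‖Φ 1 t z - Φ 0 t z‖ ≤ M * T from h1.trans (mul_le_mul_of_nonneg_left ht.2 hM0.le))
    | succ n ih =>
      intro z hz t ht
      have heq : Φ (n+2) t z - Φ (n+1) t z =
          ∫ s in (0:ℝ)..t, (G (Φ (n+1) s z) - G (Φ n s z)) := by
        rw [hΦs (n+1) t z, hΦs n t z,
          intervalIntegral.integral_sub (hIntN (n+1) z hz t ht) (hIntN n z hz t ht)]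
        ring
      rw [heq]
      have hbnd : ‖∫ s in (0:ℝ)..t, (G (Φ (n+1) s z) - G (Φ n s z))‖
          ≤ ((L:ℝ) * ((M * T) * (1/2)^n)) * t := by
        refine le_trans (intervalIntegral.norm_integral_le_of_norm_le_const
          (C := (L:ℝ) * ((M * T) * (1/2)^n)) ?_)
          (le_of_eq (by rw [sub_zero, _root_.abs_of_nonneg ht.1]))
        intro s hs
        rw [uIoc_of_le ht.1] at hs
        have hsT : s ∈ Icc (0:ℝ) T := ⟨hs.1.le, hs.2.trans ht.2⟩
        have hlip := hL.dist_le_mul (Φ (n+1) s z) (hmemN (n+1) z hz s hsT).1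
          (Φ n s z) (hmemN n z hz s hsT).1
        rw [dist_eq_norm, dist_eq_norm] at hlip
        refine hlip.trans (mul_le_mul_of_nonneg_left ?_ L.coe_nonneg)
        exact ih z hz s hsT
      refine hbnd.trans ?_
      have h8 : (L:ℝ) * t ≤ 1/2 := le_trans
        (mul_le_mul_of_nonneg_left ht.2 L.coe_nonneg) hLT
      have h10 : (0:ℝ) ≤ M * T * (1/2:ℝ)^n := by positivity
      have h11 := mul_le_mul_of_nonneg_left h8 h10
      calc (L:ℝ) * ((M * T) * (1/2)^n) * t = M * T * (1/2:ℝ)^n * ((L:ℝ) * t) := by ring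
        _ ≤ M * T * (1/2:ℝ)^n * (1/2) := h11
        _ = M * T * (1/2)^(n+1) := by ring
  -- the limit flow
  set Ψ : ℝ → ℂ → ℂ := fun t z => limUnder atTop (fun n => Φ n t z) with hΨdef
  have hTend : ∀ z ∈ ball (0:ℂ) ρ, ∀ t ∈ Icc (0:ℝ) T,
      Tendsto (fun n => Φ n t z) atTop (nhds (Ψ t z)) := by
    intro z hz t ht
    have hc : CauchySeq (fun n => Φ n t z) :=
      cauchySeq_of_le_geometric (1/2) (M*T) (by norm_num)
        (fun n => by rw [dist_eq_norm, norm_sub_rev]; exact hdist n z hz t ht)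
    exact hc.tendsto_limUnder
  have hrate : ∀ n : ℕ, ∀ z ∈ ball (0:ℂ) ρ, ∀ t ∈ Icc (0:ℝ) T,
      dist (Φ n t z) (Ψ t z) ≤ (2*(M*T)) * (1/2)^n := by
    intro n z hz t ht
    have := dist_le_of_le_geometric_of_tendsto (r := 1/2) (C := M*T) (by norm_num)
      (fun k => by rw [dist_eq_norm, norm_sub_rev]; exact hdist k z hz t ht)
      (hTend z hz t ht) n
    calc dist (Φ n t z) (Ψ t z) ≤ (M*T) * (1/2)^n / (1 - 1/2) := this
      _ = (2*(M*T)) * (1/2)^n := by ring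
  have hgeo : ∀ C : ℝ, Tendsto (fun n : ℕ => C * (1/2:ℝ)^n) atTop (nhds 0) := by
    intro C
    have h1 : Tendsto (fun n : ℕ => (1/2:ℝ)^n) atTop (nhds 0) :=
      tendsto_pow_atTop_nhds_zero_of_lt_one (by norm_num) (by norm_num)
    simpa using h1.const_mul C
  have hbndΨ : ∀ z ∈ ball (0:ℂ) ρ, ∀ t ∈ Icc (0:ℝ) T, ‖Ψ t z - z‖ ≤ M * t := by
    intro z hz t ht
    refine le_of_tendsto ((hTend z hz t ht).sub_const z).norm
      (Filter.Eventually.of_forall (fun n => (key n).1 z hz t ht))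
  have hmemΨ : ∀ z ∈ ball (0:ℂ) ρ, ∀ s ∈ Icc (0:ℝ) T,
      Ψ s z ∈ closedBall (0:ℂ) ρ' ∧ Ψ s z ∈ ball (0:ℂ) 1 := by
    intro z hz s hs
    have h1 := hbndΨ z hz s hs
    have h3 : ‖z‖ < ρ := mem_ball_zero_iff.1 hz
    have h2 : ‖Ψ s z‖ ≤ ‖z‖ + M * s := by
      calc ‖Ψ s z‖ = ‖(Ψ s z - z) + z‖ := by ring_nf
        _ ≤ ‖Ψ s z - z‖ + ‖z‖ := norm_add_le _ _
        _ ≤ ‖z‖ + M * s := by linarith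
    have h4 : M * s ≤ δ := le_trans (mul_le_mul_of_nonneg_left hs.2 hM0.le) hMT
    have h5 : ‖Ψ s z‖ ≤ ρ' := by rw [hδdef] at h4; linarith
    exact ⟨mem_closedBall_zero_iff.2 h5, mem_ball_zero_iff.2 (lt_of_le_of_lt h5 hρ'1)⟩
  have hcontΨ : ∀ z ∈ ball (0:ℂ) ρ, ContinuousOn (fun t => Ψ t z) (Icc 0 T) := by
    intro z hz
    have huni : TendstoUniformlyOn (fun n t => Φ n t z) (fun t => Ψ t z) atTop (Icc 0 T) := by
      refine Metric.tendstoUniformlyOn_iff.2 (fun ε hε => ?_)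
      filter_upwards [(hgeo (2*(M*T))).eventually (gt_mem_nhds hε)] with n hn t ht
      rw [dist_comm]
      exact lt_of_le_of_lt (hrate n z hz t ht) hn
    exact huni.continuousOn (Filter.Eventually.of_forall (fun n => (key n).2.1 z hz)).frequently
  have heqΨ : ∀ z ∈ ball (0:ℂ) ρ, ∀ t ∈ Icc (0:ℝ) T,
      Ψ t z = z + ∫ s in (0:ℝ)..t, G (Ψ s z) := by
    intro z hz t ht
    have h1 : Tendsto (fun n => Φ (n+1) t z) atTop (nhds (Ψ t z)) :=
      (hTend z hz t ht).comp (tendsto_add_atTop_nat 1)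
    have hIntΨ : IntervalIntegrable (fun s => G (Ψ s z)) volume 0 t := by
      have hcont2 : ContinuousOn (fun s => G (Ψ s z)) (Icc 0 T) :=
        hGc.comp (hcontΨ z hz) (fun s hs => (hmemΨ z hz s hs).2)
      exact (hcont2.mono
        (by rw [uIcc_of_le ht.1]; exact Icc_subset_Icc le_rfl ht.2)).intervalIntegrable
    have h2 : Tendsto (fun n => Φ (n+1) t z) atTop
        (nhds (z + ∫ s in (0:ℝ)..t, G (Ψ s z))) := by
      simp only [hΦs]
      refine Tendsto.const_add z ?_
      rw [tendsto_iff_norm_sub_tendsto_zero]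
      refine squeeze_zero (fun n => norm_nonneg _)
        (g := fun n => ((L:ℝ) * ((2*(M*T)) * (1/2)^n)) * T) ?_ ?_
      · intro n
        have hsubint : (∫ s in (0:ℝ)..t, G (Φ n s z)) - ∫ s in (0:ℝ)..t, G (Ψ s z)
            = ∫ s in (0:ℝ)..t, (G (Φ n s z) - G (Ψ s z)) :=
          (intervalIntegral.integral_sub (hIntN n z hz t ht) hIntΨ).symm
        rw [hsubint]
        refine le_trans (intervalIntegral.norm_integral_le_of_norm_le_const
          (C := (L:ℝ) * ((2*(M*T)) * (1/2)^n)) ?_) ?_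
        · intro s hs
          rw [uIoc_of_le ht.1] at hs
          have hsT : s ∈ Icc (0:ℝ) T := ⟨hs.1.le, hs.2.trans ht.2⟩
          have hlip := hL.dist_le_mul (Φ n s z) (hmemN n z hz s hsT).1
            (Ψ s z) (hmemΨ z hz s hsT).1
          rw [dist_eq_norm] at hlip
          refine hlip.trans (mul_le_mul_of_nonneg_left ?_ L.coe_nonneg)
          exact hrate n z hz s hsT
        · rw [sub_zero, _root_.abs_of_nonneg ht.1]
          have hC : 0 ≤ (L:ℝ) * ((2*(M*T)) * (1/2)^n) := by positivity
          exact mul_le_mul_of_nonneg_left ht.2 hC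
      · have := (hgeo ((L:ℝ) * (2*(M*T)) * T))
        refine this.congr (fun n => by ring)
    exact tendsto_nhds_unique h1 h2
  refine ⟨Ψ, fun z hz => ⟨hcontΨ z hz, heqΨ z hz, fun t ht => ?_⟩, fun t ht => ?_⟩
  · exact (hbndΨ z hz t ht).trans
      (by rw [hδdef] at hMT; exact le_trans (mul_le_mul_of_nonneg_left ht.2 hM0.le) hMT)
  · -- holomorphy of the limit
    have huni : TendstoUniformlyOn (fun n z => Φ n t z) (fun z => Ψ t z) atTop
        (ball (0:ℂ) ρ) := by
      refine Metric.tendstoUniformlyOn_iff.2 (fun ε hε => ?_)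
      filter_upwards [(hgeo (2*(M*T))).eventually (gt_mem_nhds hε)] with n hn z hz
      rw [dist_comm]
      exact lt_of_le_of_lt (hrate n z hz t ht) hn
    refine huni.tendstoLocallyUniformlyOn.differentiableOn
      (Filter.Eventually.of_forall (fun n => ?_)) isOpen_ball
    intro z₀ hz₀
    obtain ⟨D, _, hD⟩ := (key n).2.2.2 z₀ hz₀
    exact (hD t ht).differentiableAt.differentiableWithinAt

lemma glue_cont {f g : ℝ → ℂ} {a b c : ℝ} (hab : a ≤ b) (hbc : b ≤ c)
    (hf : ContinuousOn f (Icc a b)) (hg : ContinuousOn g (Icc b c)) (hfg : f b = g b) :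
    ContinuousOn (fun t => if t ≤ b then f t else g t) (Icc a c) := by
  set h : ℝ → ℂ := fun t => if t ≤ b then f t else g t with hhdef
  have h1 : ContinuousOn h (Icc a b) := hf.congr (fun x hx => if_pos hx.2)
  have h2 : ContinuousOn h (Icc b c) := by
    refine hg.congr (fun x hx => ?_)
    by_cases hxb : x ≤ b
    · have hxeq : x = b := le_antisymm hxb hx.1
      simp [hhdef, hxeq, hfg]
    · simp [hhdef, hxb]
  intro x hx
  have hx1 : ContinuousWithinAt h (Icc a b) x := by
    rcases le_or_gt x b with h' | h'
    · exact h1 x ⟨hx.1, h'⟩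
    · refine continuousWithinAt_of_notMem_closure ?_
      rw [isClosed_Icc.closure_eq]
      exact fun hmem => absurd hmem.2 (not_le.2 h')
  have hx2 : ContinuousWithinAt h (Icc b c) x := by
    rcases le_or_gt b x with h' | h'
    · exact h2 x ⟨h', hx.2⟩
    · refine continuousWithinAt_of_notMem_closure ?_
      rw [isClosed_Icc.closure_eq]
      exact fun hmem => absurd hmem.1 (not_le.2 h')
  have := hx1.union hx2
  rwa [Icc_union_Icc_eq_Icc hab hbc] at this

set_option maxHeartbeats 1000000 in
/-- Global existence of the holomorphic solution family up to time `S`. -/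
lemma glob (hG : DifferentiableOn ℂ G (ball (0:ℂ) 1)) (hc : 0 ≤ c)
    (hLyap : ∀ w ∈ ball (0:ℂ) 1, 2 * ((starRingEnd ℂ) w * G w).re ≤ c * (1 - normSq w))
    {r : ℝ} (hr : 0 < r) (hr1 : r < 1) {S : ℝ} (hS : 0 < S) :
    ∃ Y : ℝ → ℂ → ℂ,
      (∀ z ∈ ball (0:ℂ) r, SolOn G z (fun t => Y t z) S) ∧
      (∀ t ∈ Icc (0:ℝ) S, DifferentiableOn ℂ (fun z => Y t z) (ball (0:ℂ) r)) := by
  have hGc : ContinuousOn G (ball (0:ℂ) 1) := hG.continuousOn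
  set Rsq : ℝ := 1 - (1 - r^2) * Real.exp (-(c * S)) with hRsqdef
  have hr2 : r^2 < 1 := by nlinarith
  have hexp0 : 0 < Real.exp (-(c*S)) := Real.exp_pos _
  have hexp1 : Real.exp (-(c*S)) ≤ 1 := Real.exp_le_one_iff.2 (by nlinarith)
  have hr2Rsq : r^2 ≤ Rsq := by rw [hRsqdef]; nlinarith
  have hRsq0 : 0 ≤ Rsq := le_trans (by positivity) hr2Rsq
  have hRsq1 : Rsq < 1 := by rw [hRsqdef]; nlinarith
  set R : ℝ := Real.sqrt Rsq with hRdef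
  have hrR : r ≤ R := by
    rw [hRdef, ← Real.sqrt_sq hr.le]
    exact Real.sqrt_le_sqrt hr2Rsq
  have hR0 : 0 < R := lt_of_lt_of_le hr hrR
  have hR1 : R < 1 := by
    rw [hRdef]
    calc Real.sqrt Rsq < Real.sqrt 1 := Real.sqrt_lt_sqrt hRsq0 hRsq1
      _ = 1 := Real.sqrt_one
  have hnormR : ∀ w : ℂ, normSq w ≤ Rsq → ‖w‖ ≤ R := by
    intro w hw
    rw [Complex.norm_def, hRdef]
    exact Real.sqrt_le_sqrt hw
  set ρ : ℝ := (1 + 2*R)/3 with hρdef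
  set ρ' : ℝ := (2 + R)/3 with hρ'def
  have hRρ : R < ρ := by rw [hρdef]; linarith
  have hρρ' : ρ < ρ' := by rw [hρdef, hρ'def]; linarith
  have hρ'1 : ρ' < 1 := by rw [hρ'def]; linarith
  have hρ0 : 0 < ρ := by rw [hρdef]; linarith
  obtain ⟨T, hT0, Φ, hΦsol, hΦdiff⟩ := loc hG hρ0 hρρ' hρ'1
  -- solutions from `ball r` stay bounded by `Rsq`
  have lyapbound : ∀ z ∈ ball (0:ℂ) r, ∀ (y : ℝ → ℂ) (b : ℝ), b ≤ S → SolOn G z y b →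
      ∀ t ∈ Icc (0:ℝ) b, normSq (y t) ≤ Rsq := by
    intro z hz y b hbS hsol t ht
    have hl := hsol.lyap hGc hc hLyap t ht
    have hzr : normSq z ≤ r^2 := by
      have : ‖z‖ < r := mem_ball_zero_iff.1 hz
      nlinarith [Complex.sq_norm z, norm_nonneg z, Complex.sq_norm z,
        norm_nonneg z]
    have hble : Real.exp (-(c*S)) ≤ Real.exp (-(c*t)) :=
      Real.exp_le_exp.2 (by nlinarith [ht.1, ht.2])
    have hge : (1 - r^2) * Real.exp (-(c*S)) ≤ (1 - normSq z) * Real.exp (-(c*t)) :=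
      mul_le_mul (by linarith) hble hexp0.le (by nlinarith)
    rw [hRsqdef]; linarith
  -- main induction on the number of time steps
  have main : ∀ k : ℕ, ∃ Y : ℝ → ℂ → ℂ,
      (∀ z ∈ ball (0:ℂ) r,
        ContinuousOn (fun t => Y t z) (Icc 0 (min (k*T) S)) ∧
        (∀ t ∈ Icc (0:ℝ) (min (k*T) S), ‖Y t z‖ < 1) ∧
        (∀ t ∈ Icc (0:ℝ) (min (k*T) S), Y t z = z + ∫ s in (0:ℝ)..t, G (Y s z))) ∧
      (∀ t ∈ Icc (0:ℝ) (min (k*T) S), DifferentiableOn ℂ (fun z => Y t z) (ball (0:ℂ) r)) := by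
    intro k
    induction k with
    | zero =>
      refine ⟨fun _ z => z, fun z hz => ⟨continuousOn_const, ?_, ?_⟩, ?_⟩
      · intro t ht
        simp only [Nat.cast_zero, zero_mul, min_eq_left hS.le] at ht
        have : ‖z‖ < r := mem_ball_zero_iff.1 hz
        linarith
      · intro t ht
        simp only [Nat.cast_zero, zero_mul, min_eq_left hS.le] at ht
        have ht0 : t = 0 := le_antisymm ht.2 ht.1
        simp [ht0]
      · exact fun t _ => differentiableOn_id
    | succ k ih =>
      obtain ⟨Y, ihsol, ihdiff⟩ := ih
      push_cast
      rcases le_or_gt S ((k:ℝ)*T) with hSk | hkS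
      · -- nothing to extend
        have he1 : min ((k:ℝ)*T) S = S := min_eq_right hSk
        have he2 : min (((k:ℝ)+1)*T) S = S := by
          refine min_eq_right (hSk.trans ?_)
          nlinarith [hT0.le]
        rw [he2]
        refine ⟨Y, fun z hz => ?_, ?_⟩
        · obtain ⟨hc1, hc2, hc3⟩ := ihsol z hz
          rw [he1] at hc1 hc2 hc3
          exact ⟨hc1, hc2, hc3⟩
        · intro t ht
          exact ihdiff t (by rw [he1]; exact ht)
      · -- extend by one local step
        set τ : ℝ := (k:ℝ)*T with hτdef
        have hτ0 : 0 ≤ τ := by positivity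
        have hminτ : min τ S = τ := min_eq_left hkS.le
        set b' : ℝ := min (((k:ℝ)+1)*T) S with hb'def
        have hτb' : τ ≤ b' := le_min (by rw [hτdef]; nlinarith [hT0.le]) hkS.le
        have hb'T : b' - τ ≤ T := by
          have h1 : b' ≤ ((k:ℝ)+1)*T := min_le_left _ _
          have h2 : ((k:ℝ)+1)*T = τ + T := by rw [hτdef]; ring
          linarith
        have hb'S : b' ≤ S := min_le_right _ _
        have hsolτ : ∀ z ∈ ball (0:ℂ) r, SolOn G z (fun t => Y t z) τ := by
          intro z hz
          obtain ⟨hc1, hc2, hc3⟩ := ihsol z hz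
          rw [hminτ] at hc1 hc2 hc3
          exact ⟨hc1, hc2, hc3⟩
        have hYb : ∀ z ∈ ball (0:ℂ) r, ∀ t ∈ Icc (0:ℝ) τ, normSq (Y t z) ≤ Rsq :=
          fun z hz t ht => lyapbound z hz _ τ hkS.le (hsolτ z hz) t ht
        have hYτ : ∀ z ∈ ball (0:ℂ) r, Y τ z ∈ ball (0:ℂ) ρ := by
          intro z hz
          have h2 := hYb z hz τ ⟨hτ0, le_rfl⟩
          exact mem_ball_zero_iff.2 (lt_of_le_of_lt (hnormR _ h2) hRρ)
        have hwsol : ∀ z ∈ ball (0:ℂ) r, ∀ u ∈ Icc (0:ℝ) T,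
            Φ u (Y τ z) = Y τ z + ∫ s in (0:ℝ)..u, G (Φ s (Y τ z)) :=
          fun z hz => (hΦsol (Y τ z) (hYτ z hz)).2.1
        have hΦ0w : ∀ z ∈ ball (0:ℂ) r, Φ 0 (Y τ z) = Y τ z := by
          intro z hz
          have h3 := hwsol z hz 0 ⟨le_rfl, hT0.le⟩
          simpa using h3
        have hcontglue : ∀ z ∈ ball (0:ℂ) r,
            ContinuousOn (fun t => if t ≤ τ then Y t z else Φ (t - τ) (Y τ z)) (Icc 0 b') := by
          intro z hz
          refine glue_cont hτ0 hτb' (hsolτ z hz).1 ?_ ?_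
          · have hc := (hΦsol (Y τ z) (hYτ z hz)).1
            exact hc.comp ((continuous_id.sub continuous_const).continuousOn)
              (fun t ht => ⟨by simp; linarith [ht.1], by simp; linarith [ht.2, hb'T]⟩)
          · rw [sub_self]
            exact (hΦ0w z hz).symm
        have hmem1 : ∀ z ∈ ball (0:ℂ) r, ∀ t ∈ Icc (0:ℝ) b',
            ‖(if t ≤ τ then Y t z else Φ (t - τ) (Y τ z))‖ < 1 := by
          intro z hz t ht
          by_cases htτ : t ≤ τ
          · rw [if_pos htτ]
            have h2 := hYb z hz t ⟨ht.1, htτ⟩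
            exact lt_of_le_of_lt (hnormR _ h2) hR1
          · rw [if_neg htτ]
            push_neg at htτ
            have hu : t - τ ∈ Icc (0:ℝ) T := ⟨by linarith, by linarith [ht.2]⟩
            have hb := (hΦsol (Y τ z) (hYτ z hz)).2.2 (t-τ) hu
            have hwR : ‖Y τ z‖ ≤ R := hnormR _ (hYb z hz τ ⟨hτ0, le_rfl⟩)
            calc ‖Φ (t-τ) (Y τ z)‖ = ‖(Φ (t-τ) (Y τ z) - Y τ z) + Y τ z‖ := by ring_nf
              _ ≤ ‖Φ (t-τ) (Y τ z) - Y τ z‖ + ‖Y τ z‖ := norm_add_le _ _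
              _ ≤ (ρ' - ρ) + R := by linarith
              _ < 1 := by linarith [hRρ, hρ'1]
        have heqglue : ∀ z ∈ ball (0:ℂ) r, ∀ t ∈ Icc (0:ℝ) b',
            (if t ≤ τ then Y t z else Φ (t - τ) (Y τ z)) =
              z + ∫ s in (0:ℝ)..t, G (if s ≤ τ then Y s z else Φ (s - τ) (Y τ z)) := by
          intro z hz t ht
          have hIntglue : ∀ u v : ℝ, u ∈ Icc (0:ℝ) b' → v ∈ Icc (0:ℝ) b' → u ≤ v →
              IntervalIntegrable
                (fun s => G (if s ≤ τ then Y s z else Φ (s - τ) (Y τ z))) volume u v := by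
            intro u v hu hv huv
            refine ((hGc.comp (hcontglue z hz)
              (fun s hs => mem_ball_zero_iff.2 (hmem1 z hz s hs))).mono ?_).intervalIntegrable
            rw [uIcc_of_le huv]
            exact Icc_subset_Icc hu.1 hv.2
          by_cases htτ : t ≤ τ
          · rw [if_pos htτ]
            have he := (hsolτ z hz).2.2 t ⟨ht.1, htτ⟩
            beta_reduce at he
            rw [he]
            congr 1
            refine intervalIntegral.integral_congr (fun s hs => ?_)
            rw [uIcc_of_le ht.1] at hs
            rw [if_pos (hs.2.trans htτ)]
          · rw [if_neg htτ]
            push_neg at htτ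
            have hu : t - τ ∈ Icc (0:ℝ) T := ⟨by linarith, by linarith [ht.2]⟩
            have h1 : Φ (t - τ) (Y τ z) = Y τ z + ∫ s in (0:ℝ)..(t-τ), G (Φ s (Y τ z)) :=
              hwsol z hz _ hu
            have h2 : (∫ s in τ..t, G (Φ (s - τ) (Y τ z)))
                = ∫ s in (0:ℝ)..(t-τ), G (Φ s (Y τ z)) := by
              have h7 := intervalIntegral.integral_comp_sub_right
                (a := τ) (b := t) (fun s => G (Φ s (Y τ z))) τ
              rw [h7, sub_self]
            have h3 : (∫ s in τ..t, G (if s ≤ τ then Y s z else Φ (s - τ) (Y τ z)))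
                = ∫ s in τ..t, G (Φ (s - τ) (Y τ z)) := by
              refine intervalIntegral.integral_congr (fun s hs => ?_)
              rw [uIcc_of_le htτ.le] at hs
              by_cases hsτ : s ≤ τ
              · have hseq : s = τ := le_antisymm hsτ hs.1
                rw [if_pos hsτ, hseq, sub_self, hΦ0w z hz]
              · rw [if_neg hsτ]
            have h4 : (∫ s in (0:ℝ)..τ, G (if s ≤ τ then Y s z else Φ (s - τ) (Y τ z)))
                = ∫ s in (0:ℝ)..τ, G (Y s z) := by
              refine intervalIntegral.integral_congr (fun s hs => ?_)
              rw [uIcc_of_le hτ0] at hs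
              rw [if_pos hs.2]
            have h5 : Y τ z = z + ∫ s in (0:ℝ)..τ, G (Y s z) := by
              have h5' := (hsolτ z hz).2.2 τ ⟨hτ0, le_rfl⟩
              beta_reduce at h5'
              exact h5'
            have h6 := intervalIntegral.integral_add_adjacent_intervals
              (hIntglue 0 τ ⟨le_rfl, hτ0.trans hτb'⟩ ⟨hτ0, hτb'⟩ hτ0)
              (hIntglue τ t ⟨hτ0, hτb'⟩ ht htτ.le)
            calc Φ (t - τ) (Y τ z)
                = Y τ z + ∫ s in (0:ℝ)..(t-τ), G (Φ s (Y τ z)) := h1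
              _ = (z + ∫ s in (0:ℝ)..τ, G (Y s z)) + ∫ s in τ..t, G (Φ (s - τ) (Y τ z)) := by
                  rw [← h5, h2]
              _ = z + ((∫ s in (0:ℝ)..τ, G (if s ≤ τ then Y s z else Φ (s - τ) (Y τ z)))
                  + ∫ s in τ..t, G (if s ≤ τ then Y s z else Φ (s - τ) (Y τ z))) := by
                  rw [h4, h3]; ring
              _ = z + ∫ s in (0:ℝ)..t,
                    G (if s ≤ τ then Y s z else Φ (s - τ) (Y τ z)) := by rw [h6]
        refine ⟨fun t z => if t ≤ τ then Y t z else Φ (t - τ) (Y τ z),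
          fun z hz => ⟨hcontglue z hz, hmem1 z hz, heqglue z hz⟩, ?_⟩
        intro t ht
        by_cases htτ : t ≤ τ
        · simp only [if_pos htτ]
          exact ihdiff t (by rw [hminτ]; exact ⟨ht.1, htτ⟩)
        · simp only [if_neg htτ]
          push_neg at htτ
          have hu : t - τ ∈ Icc (0:ℝ) T := ⟨by linarith, by linarith [ht.2]⟩
          exact DifferentiableOn.comp (hΦdiff (t-τ) hu)
            (ihdiff τ (by rw [hminτ]; exact ⟨hτ0, le_rfl⟩)) (fun z hz => hYτ z hz)
  -- conclude
  obtain ⟨N, hN⟩ := exists_nat_gt (S / T)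
  have hSN : S ≤ (N:ℝ) * T := by
    have h1 := (div_lt_iff₀ hT0).1 hN
    linarith
  obtain ⟨Y, hsol, hdiff⟩ := main N
  have hminS : min ((N:ℝ)*T) S = S := min_eq_right hSN
  refine ⟨Y, fun z hz => ?_, ?_⟩
  · obtain ⟨h1, h2, h3⟩ := hsol z hz
    rw [hminS] at h1 h2 h3
    exact ⟨h1, h2, h3⟩
  · intro t ht
    exact hdiff t (by rw [hminS]; exact ht)

/-- Master lemma: a holomorphic vector field on the disk with the Lyapunov property
generates a semigroup; `-G` is an infinitesimal generator. -/
theorem isGen (hG : DifferentiableOn ℂ G (ball (0:ℂ) 1)) (hc : 0 ≤ c)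
    (hLyap : ∀ w ∈ ball (0:ℂ) 1, 2 * ((starRingEnd ℂ) w * G w).re ≤ c * (1 - normSq w)) :
    IsGenOnDisk (fun z => -G z) := by
  classical
  have hGc : ContinuousOn G (ball (0:ℂ) 1) := hG.continuousOn
  have hglob : ∀ r S : ℝ, 0 < r → r < 1 → 0 < S →
      ∃ Y : ℝ → ℂ → ℂ,
        (∀ z ∈ ball (0:ℂ) r, SolOn G z (fun t => Y t z) S) ∧
        (∀ t ∈ Icc (0:ℝ) S, DifferentiableOn ℂ (fun z => Y t z) (ball (0:ℂ) r)) :=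
    fun r S h1 h2 h3 => glob hG hc hLyap h1 h2 h3
  choose Yc hYc1 hYc2 using hglob
  have huniq : ∀ z : ℂ, ∀ (y₁ y₂ : ℝ → ℂ) (b₁ b₂ : ℝ), SolOn G z y₁ b₁ → SolOn G z y₂ b₂ →
      ∀ t, 0 ≤ t → t ≤ b₁ → t ≤ b₂ → y₁ t = y₂ t := by
    intro z y₁ y₂ b₁ b₂ h₁ h₂ t ht htb₁ htb₂
    exact sol_unique hG hc hLyap ht (h₁.mono htb₁) (h₂.mono htb₂) t ⟨ht, le_rfl⟩
  -- basic radius facts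
  have hrz1 : ∀ z : ℂ, ‖z‖ < 1 → 0 < (1 + ‖z‖)/2 := by
    intro z _; positivity
  have hrz2 : ∀ z : ℂ, ‖z‖ < 1 → (1 + ‖z‖)/2 < 1 := by
    intro z h; linarith
  have hrz3 : ∀ z : ℂ, ‖z‖ < 1 → ‖z‖ < (1 + ‖z‖)/2 := by
    intro z h; linarith
  set F : ℝ → ℂ → ℂ := fun t z =>
    if h : 0 ≤ t ∧ ‖z‖ < 1 then
      Yc ((1 + ‖z‖)/2) (t+1) (hrz1 z h.2) (hrz2 z h.2) (by linarith [h.1]) t z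
    else z with hFdef
  -- consistency
  have hcons : ∀ (r S : ℝ) (hr : 0 < r) (hr1 : r < 1) (hS : 0 < S) (z : ℂ) (t : ℝ),
      ‖z‖ < r → 0 ≤ t → t ≤ S → F t z = Yc r S hr hr1 hS t z := by
    intro r S h1 h2 h3 z t hzr ht0 htS
    have hz1 : ‖z‖ < 1 := lt_trans hzr h2
    rw [hFdef]
    simp only [dif_pos (⟨ht0, hz1⟩ : (0:ℝ) ≤ t ∧ ‖z‖ < 1)]
    have hs1 : SolOn G z
        (fun u => Yc ((1 + ‖z‖)/2) (t+1) (hrz1 z hz1) (hrz2 z hz1) (by linarith) u z) (t+1) :=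
      hYc1 _ _ _ _ _ z (mem_ball_zero_iff.2 (hrz3 z hz1))
    have hs2 : SolOn G z (fun u => Yc r S h1 h2 h3 u z) S :=
      hYc1 _ _ _ _ _ z (mem_ball_zero_iff.2 hzr)
    exact huniq z _ _ _ _ hs1 hs2 t ht0 (by linarith) htS
  have hFsol : ∀ (z : ℂ) (hz : ‖z‖ < 1) (S : ℝ) (hS : 0 < S),
      SolOn G z (fun u => Yc ((1 + ‖z‖)/2) S (hrz1 z hz) (hrz2 z hz) hS u z) S :=
    fun z hz S hS => hYc1 _ _ _ _ _ z (mem_ball_zero_iff.2 (hrz3 z hz))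
  refine ⟨F, ?_, ?_, ?_, ?_⟩
  · -- differentiability and mapsTo
    intro t ht
    constructor
    · intro z₀ hz₀
      have hz₀1 : ‖z₀‖ < 1 := mem_ball_zero_iff.1 hz₀
      set r₀ : ℝ := (1 + ‖z₀‖)/2 with hr₀def
      have h1 : 0 < r₀ := hrz1 z₀ hz₀1
      have h2 : r₀ < 1 := hrz2 z₀ hz₀1
      have h3 : 0 < t + 1 := by linarith
      have hEq : Set.EqOn (F t) (fun z => Yc r₀ (t+1) h1 h2 h3 t z) (ball (0:ℂ) r₀) :=
        fun z hz => hcons r₀ (t+1) h1 h2 h3 z t (mem_ball_zero_iff.1 hz) ht (by linarith)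
      have hdiff := hYc2 r₀ (t+1) h1 h2 h3 t ⟨ht, by linarith⟩
      have hmem₀ : z₀ ∈ ball (0:ℂ) r₀ := mem_ball_zero_iff.2 (hrz3 z₀ hz₀1)
      have hx : DifferentiableAt ℂ (fun z => Yc r₀ (t+1) h1 h2 h3 t z) z₀ :=
        (hdiff z₀ hmem₀).differentiableAt (isOpen_ball.mem_nhds hmem₀)
      have hev : F t =ᶠ[nhds z₀] (fun z => Yc r₀ (t+1) h1 h2 h3 t z) :=
        Filter.eventuallyEq_of_mem (isOpen_ball.mem_nhds hmem₀) hEq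
      exact (hev.differentiableAt_iff.2 hx).differentiableWithinAt
    · intro z hz
      have hz1 : ‖z‖ < 1 := mem_ball_zero_iff.1 hz
      have hsol := hFsol z hz1 (t+1) (by linarith)
      have hF : F t z = Yc ((1 + ‖z‖)/2) (t+1) _ _ _ t z :=
        hcons _ _ (hrz1 z hz1) (hrz2 z hz1) (by linarith) z t (hrz3 z hz1) ht (by linarith)
      rw [mem_ball_zero_iff, hF]
      exact hsol.2.1 t ⟨ht, by linarith⟩
  · -- semigroup property
    intro t s ht hs z hz
    have hz1 : ‖z‖ < 1 := mem_ball_zero_iff.1 hz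
    have hts1 : (0:ℝ) < t + s + 1 := by linarith
    have hsolz : SolOn G z
        (fun u => Yc ((1 + ‖z‖)/2) (t+s+1) (hrz1 z hz1) (hrz2 z hz1) hts1 u z) (t+s+1) :=
      hFsol z hz1 (t+s+1) hts1
    set y : ℝ → ℂ := fun u => Yc ((1 + ‖z‖)/2) (t+s+1) (hrz1 z hz1) (hrz2 z hz1) hts1 u z
      with hydef
    have hw : F s z = y s :=
      hcons _ _ (hrz1 z hz1) (hrz2 z hz1) hts1 z s (hrz3 z hz1) hs (by linarith)
    have hFts : F (t+s) z = y (t+s) :=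
      hcons _ _ (hrz1 z hz1) (hrz2 z hz1) hts1 z (t+s) (hrz3 z hz1) (by linarith) (by linarith)
    have hw1 : ‖y s‖ < 1 := hsolz.2.1 s ⟨hs, by linarith⟩
    -- integrability of the integrand along y
    have hicont : ContinuousOn (fun u => G (y u)) (Icc 0 (t+s+1)) :=
      hsolz.integrand_cont hGc
    have hint : ∀ a b : ℝ, 0 ≤ a → a ≤ b → b ≤ t+s+1 →
        IntervalIntegrable (fun σ => G (y σ)) volume a b := by
      intro a b ha hab hb
      exact (hicont.mono (by rw [uIcc_of_le hab]; exact Icc_subset_Icc ha hb)).intervalIntegrable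
    -- the shifted curve is a solution from y s
    have hy₁ : SolOn G (y s) (fun u => y (u + s)) t := by
      refine ⟨?_, ?_, ?_⟩
      · refine hsolz.1.comp ((continuous_id.add continuous_const).continuousOn) ?_
        intro u hu
        simp only [id_eq]
        constructor
        · linarith [hu.1]
        · linarith [hu.2]
      · intro u hu
        exact hsolz.2.1 (u+s) ⟨by linarith [hu.1], by linarith [hu.2]⟩
      · intro u hu
        have he1 := hsolz.2.2 (u+s) ⟨by linarith [hu.1], by linarith [hu.2]⟩
        have he2 := hsolz.2.2 s ⟨hs, by linarith⟩
        beta_reduce at he1 he2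
        have hadd := intervalIntegral.integral_add_adjacent_intervals
          (hint 0 s le_rfl hs (by linarith))
          (hint s (u+s) hs (by linarith [hu.1]) (by linarith [hu.2]))
        have hshift : (∫ σ in s..(u+s), G (y σ)) = ∫ σ in (0:ℝ)..u, G (y (σ+s)) := by
          have h7 := intervalIntegral.integral_comp_add_right (a := (0:ℝ)) (b := u)
            (fun σ => G (y σ)) s
          rw [h7, zero_add]
        calc y (u+s) = z + ∫ σ in (0:ℝ)..(u+s), G (y σ) := he1
          _ = z + ((∫ σ in (0:ℝ)..s, G (y σ)) + ∫ σ in s..(u+s), G (y σ)) := by rw [hadd]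
          _ = (z + ∫ σ in (0:ℝ)..s, G (y σ)) + ∫ σ in (0:ℝ)..u, G (y (σ+s)) := by
              rw [hshift]; ring
          _ = y s + ∫ σ in (0:ℝ)..u, G (y (σ+s)) := by rw [← he2]
    -- curve from y s given by the chooser
    have ht1 : (0:ℝ) < t + 1 := by linarith
    have hy₂ : SolOn G (y s)
        (fun u => Yc ((1 + ‖y s‖)/2) (t+1) (hrz1 _ hw1) (hrz2 _ hw1) ht1 u (y s)) (t+1) :=
      hFsol (y s) hw1 (t+1) ht1
    have hFtw : F t (y s) = Yc ((1 + ‖y s‖)/2) (t+1) (hrz1 _ hw1) (hrz2 _ hw1) ht1 t (y s) :=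
      hcons _ _ (hrz1 _ hw1) (hrz2 _ hw1) ht1 (y s) t (hrz3 _ hw1) ht (by linarith)
    have hfinal := huniq (y s) _ _ t (t+1) hy₁ hy₂ t ht le_rfl (by linarith)
    rw [hFts, hw, hFtw]
    exact hfinal
  · -- continuity at t = 0⁺
    intro z hz
    have hz1 : ‖z‖ < 1 := mem_ball_zero_iff.1 hz
    have h2pos : (0:ℝ) < 2 := two_pos
    set y : ℝ → ℂ := fun u => Yc ((1 + ‖z‖)/2) 2 (hrz1 z hz1) (hrz2 z hz1) h2pos u z with hydef
    have hsol : SolOn G z (fun u => y u) 2 := hFsol z hz1 2 h2pos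
    have hFt : ∀ t : ℝ, 0 ≤ t → t ≤ 1 → F t z = y t := by
      intro t h1' h2'
      exact hcons _ _ (hrz1 z hz1) (hrz2 z hz1) h2pos z t (hrz3 z hz1) h1' (by linarith)
    have hicont : ContinuousOn (fun u => G (y u)) (Icc 0 2) := hsol.integrand_cont hGc
    obtain ⟨s₀, hs₀mem, hs₀⟩ := (isCompact_Icc (a := (0:ℝ)) (b := 2)).exists_isMaxOn
      ⟨0, by norm_num⟩ (hicont.norm)
    set M : ℝ := ‖G (y s₀)‖ + 1 with hMdef
    have hM0 : 0 < M := by positivity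
    have hMb : ∀ u ∈ Icc (0:ℝ) 2, ‖G (y u)‖ ≤ M := fun u hu => (hs₀ hu).trans (by linarith)
    rw [Metric.tendsto_nhdsWithin_nhds]
    intro ε hε
    refine ⟨min 1 (ε / (M + 1)), lt_min one_pos (by positivity), ?_⟩
    intro t htIoi htd
    rw [Real.dist_eq, sub_zero] at htd
    have ht0 : 0 < t := htIoi
    have habs : |t| = t := _root_.abs_of_nonneg ht0.le
    rw [habs] at htd
    have ht1 : t ≤ 1 := le_of_lt (lt_of_lt_of_le htd (min_le_left _ _))
    have htε : t < ε / (M + 1) := lt_of_lt_of_le htd (min_le_right _ _)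
    rw [hFt t ht0.le ht1, dist_eq_norm]
    have he := hsol.2.2 t ⟨ht0.le, by linarith⟩
    beta_reduce at he
    rw [he]
    have hbnd : ‖(∫ u in (0:ℝ)..t, G (y u))‖ ≤ M * t := by
      refine le_trans (intervalIntegral.norm_integral_le_of_norm_le_const (C := M) ?_)
        (le_of_eq (by rw [sub_zero, habs]))
      intro u hu
      rw [uIoc_of_le ht0.le] at hu
      exact hMb u ⟨hu.1.le, by linarith [hu.2]⟩
    calc ‖z + (∫ u in (0:ℝ)..t, G (y u)) - z‖ = ‖∫ u in (0:ℝ)..t, G (y u)‖ := by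
          congr 1; ring
      _ ≤ M * t := hbnd
      _ < ε := by
          rw [lt_div_iff₀ (by positivity : (0:ℝ) < M + 1)] at htε
          nlinarith
  · -- the generator limit
    intro z hz
    have hz1 : ‖z‖ < 1 := mem_ball_zero_iff.1 hz
    have h2pos : (0:ℝ) < 2 := two_pos
    set y : ℝ → ℂ := fun u => Yc ((1 + ‖z‖)/2) 2 (hrz1 z hz1) (hrz2 z hz1) h2pos u z with hydef
    have hsol : SolOn G z (fun u => y u) 2 := hFsol z hz1 2 h2pos
    have hy0 : y 0 = z := hsol.y0 (by norm_num)
    have hFt : ∀ t : ℝ, 0 ≤ t → t ≤ 1 → F t z = y t := by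
      intro t h1' h2'
      exact hcons _ _ (hrz1 z hz1) (hrz2 z hz1) h2pos z t (hrz3 z hz1) h1' (by linarith)
    have hicont : ContinuousOn (fun u => G (y u)) (Icc 0 2) := hsol.integrand_cont hGc
    rw [Metric.tendsto_nhdsWithin_nhds]
    intro ε hε
    have hcw : ContinuousWithinAt (fun u => G (y u)) (Icc 0 2) 0 :=
      hicont 0 ⟨le_rfl, by norm_num⟩
    rw [Metric.continuousWithinAt_iff] at hcw
    obtain ⟨δ, hδ0, hδ⟩ := hcw (ε/2) (by positivity)
    refine ⟨min 1 δ, lt_min one_pos hδ0, ?_⟩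
    intro t htIoi htd
    rw [Real.dist_eq, sub_zero] at htd
    have ht0 : 0 < t := htIoi
    have habs : |t| = t := _root_.abs_of_nonneg ht0.le
    rw [habs] at htd
    have ht1 : t ≤ 1 := le_of_lt (lt_of_lt_of_le htd (min_le_left _ _))
    have htδ : t < δ := lt_of_lt_of_le htd (min_le_right _ _)
    have htne : (t:ℂ) ≠ 0 := by
      simp only [ne_eq, Complex.ofReal_eq_zero]
      exact ne_of_gt ht0
    have he := hsol.2.2 t ⟨ht0.le, by linarith⟩
    beta_reduce at he
    have hint : IntervalIntegrable (fun u => G (y u)) volume 0 t :=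
      (hicont.mono (by rw [uIcc_of_le ht0.le]; exact Icc_subset_Icc le_rfl (by linarith))).intervalIntegrable
    have hkey : (z - F t z) / (t:ℂ) - (-G z) =
        (∫ u in (0:ℝ)..t, (G z - G (y u))) / (t:ℂ) := by
      rw [hFt t ht0.le ht1, he]
      rw [intervalIntegral.integral_sub intervalIntegrable_const hint,
        intervalIntegral.integral_const]
      rw [sub_zero, Complex.real_smul]
      field_simp
      ring
    rw [dist_eq_norm, hkey]
    have hbnd : ‖(∫ u in (0:ℝ)..t, (G z - G (y u)))‖ ≤ (ε/2) * t := by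
      refine le_trans (intervalIntegral.norm_integral_le_of_norm_le_const (C := ε/2) ?_)
        (le_of_eq (by rw [sub_zero, habs]))
      intro u hu
      rw [uIoc_of_le ht0.le] at hu
      have humem : u ∈ Icc (0:ℝ) 2 := ⟨hu.1.le, by linarith [hu.2]⟩
      have hud : dist u (0:ℝ) < δ := by
        rw [Real.dist_eq, sub_zero, _root_.abs_of_nonneg hu.1.le]
        linarith [hu.2]
      have := hδ humem hud
      rw [dist_eq_norm] at this
      rw [norm_sub_rev]
      calc ‖G (y u) - G z‖ = ‖G (y u) - G (y 0)‖ := by rw [hy0]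
        _ ≤ ε/2 := this.le
    rw [norm_div]
    have hnt : ‖(t:ℂ)‖ = t := by
      rw [Complex.norm_real, Real.norm_eq_abs, habs]
    rw [hnt]
    calc ‖∫ u in (0:ℝ)..t, (G z - G (y u))‖ / t ≤ (ε/2 * t) / t :=
          (div_le_div_iff_of_pos_right ht0).2 hbnd
      _ = ε/2 := by field_simp
      _ < ε := by linarith

lemma re_identity (w A : ℂ) :
    ((starRingEnd ℂ) w * ((1 - w)^2 * A)).re =
      (1 - normSq w) * ((1 - w) * A).re - normSq (1 - w) * A.re := by
  have hm : (starRingEnd ℂ) w * w = (normSq w : ℂ) := by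
    rw [mul_comm]; exact Complex.mul_conj w
  have hm2 : (1 - w) * (starRingEnd ℂ) (1 - w) = (normSq (1 - w) : ℂ) := Complex.mul_conj (1 - w)
  rw [map_sub, map_one] at hm2
  have h1 : (starRingEnd ℂ) w * ((1 - w)^2 * A) =
      ((1 - normSq w : ℝ) : ℂ) * ((1 - w) * A) - ((normSq (1 - w) : ℝ) : ℂ) * A := by
    push_cast
    rw [← hm, ← hm2]
    ring
  rw [h1, Complex.sub_re, Complex.re_ofReal_mul, Complex.re_ofReal_mul]

lemma im_identity (z : ℂ) :
    ((starRingEnd ℂ) z * (1 - z)^2).im = -z.im * (1 - normSq z) := by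
  simp only [Complex.mul_im, Complex.mul_re, Complex.sub_re, Complex.sub_im, Complex.one_re,
    Complex.one_im, Complex.conj_re, Complex.conj_im, Complex.normSq_apply, pow_two]
  ring

set_option maxHeartbeats 1000000 in
/-- Key pointwise inequality for the Berkson–Porta vector field `(1-z)^2 p(z)`. -/
lemma key_ineq {p : ℂ → ℂ} (hp : DifferentiableOn ℂ p (ball (0:ℂ) 1))
    (hre : ∀ z ∈ ball (0:ℂ) 1, 0 ≤ (p z).re) :
    ∀ z ∈ ball (0:ℂ) 1,
      2 * ((starRingEnd ℂ) z * ((1 - z) ^ 2 * p z)).re ≤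
        (2 * (|(p 0).im| + 2 * (p 0).re + 2)) * (1 - normSq z) := by
  intro z hz
  have hz1 : normSq z < 1 := by
    have h5 : ‖z‖ < 1 := by
      exact mem_ball_zero_iff.1 hz
    nlinarith [Complex.sq_norm z, norm_nonneg z]
  have hznn : 0 ≤ 1 - normSq z := by linarith
  set b : ℝ := (p 0).im with hbdef
  have hp0re : 0 ≤ (p 0).re := hre 0 (by simp)
  -- the ε-perturbed estimate
  have hstep : ∀ ε : ℝ, 0 < ε → ε ≤ 1 →
      ((starRingEnd ℂ) z * ((1 - z) ^ 2 * p z)).re ≤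
        (|b| + 2 * (p 0).re + 2) * (1 - normSq z) + 4 * ε := by
    intro ε hε0 hε1
    set a : ℝ := (p 0).re + ε with hadef
    have ha0 : 0 < a := by positivity
    set P : ℂ → ℂ := fun w => p w - (b:ℂ) * Complex.I + (ε:ℂ) with hPdef
    have hPre : ∀ w ∈ ball (0:ℂ) 1, (P w).re = (p w).re + ε := by
      intro w _
      simp [hPdef]
    have hPrepos : ∀ w ∈ ball (0:ℂ) 1, 0 < (P w).re := by
      intro w hw
      rw [hPre w hw]
      have := hre w hw
      linarith
    have hP0 : P 0 = (a:ℂ) := by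
      rw [hPdef, hadef]
      apply Complex.ext <;> simp [hbdef]
    have hPd : DifferentiableOn ℂ P (ball (0:ℂ) 1) := by
      rw [hPdef]; fun_prop
    have hden : ∀ w ∈ ball (0:ℂ) 1, P w + (a:ℂ) ≠ 0 := by
      intro w hw h0
      have h6 : (P w + (a:ℂ)).re = 0 := by rw [h0]; simp
      rw [Complex.add_re, Complex.ofReal_re] at h6
      have := hPrepos w hw
      linarith
    set φ : ℂ → ℂ := fun w => (P w - (a:ℂ)) / (P w + (a:ℂ)) with hφdef
    have hidsq : ∀ w : ℂ, normSq (P w + (a:ℂ)) - normSq (P w - (a:ℂ)) = 4 * a * (P w).re := by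
      intro w
      simp only [Complex.normSq_apply, Complex.add_re, Complex.add_im, Complex.sub_re,
        Complex.sub_im, Complex.ofReal_re, Complex.ofReal_im]
      ring
    have hφd : DifferentiableOn ℂ φ (ball (0:ℂ) 1) := by
      rw [hφdef]
      exact (hPd.sub (differentiableOn_const _)).div
        (hPd.add (differentiableOn_const _)) hden
    have hφmaps : Set.MapsTo φ (ball (0:ℂ) 1) (ball (0:ℂ) 1) := by
      intro w hw
      rw [mem_ball_zero_iff, hφdef]
      have hlt : normSq (P w - (a:ℂ)) < normSq (P w + (a:ℂ)) := by
        have h7 := hidsq w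
        have h8 := hPrepos w hw
        nlinarith
      have habs : ‖P w - (a:ℂ)‖ < ‖P w + (a:ℂ)‖ := by
        rw [Complex.norm_def, Complex.norm_def]
        exact Real.sqrt_lt_sqrt (Complex.normSq_nonneg _) hlt
      rw [norm_div]
      rw [div_lt_one (lt_of_le_of_lt (norm_nonneg _) habs)]
      exact habs
    have hφ0 : φ 0 = 0 := by
      rw [hφdef]
      simp only [hP0, sub_self, zero_div]
    have hSch : ‖φ z‖ ≤ ‖z‖ :=
      Complex.norm_le_norm_of_mapsTo_ball hφd (hφmaps.mono_right ball_subset_closedBall) hφ0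
        (by exact mem_ball_zero_iff.1 hz)
    -- quadratic estimate
    have hquad : (1 - normSq z) * normSq (P z) ≤ 4 * a * (P z).re := by
      have hd0 : 0 < normSq (P z + (a:ℂ)) := Complex.normSq_pos.2 (hden z hz)
      have hnφ : normSq (φ z) ≤ normSq z := by
        rw [← Complex.sq_norm, ← Complex.sq_norm]
        exact pow_le_pow_left₀ (norm_nonneg _) hSch 2
      have hφval : normSq (φ z) = normSq (P z - (a:ℂ)) / normSq (P z + (a:ℂ)) := by
        rw [hφdef]; exact map_div₀ normSq _ _
      have h9 : normSq (P z - (a:ℂ)) ≤ normSq z * normSq (P z + (a:ℂ)) := by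
        rw [hφval, div_le_iff₀ hd0] at hnφ
        exact hnφ
      have h10 := hidsq z
      have h11 : normSq (P z) ≤ normSq (P z + (a:ℂ)) := by
        have h12 : normSq (P z + (a:ℂ)) - normSq (P z) = 2*a*(P z).re + a^2 := by
          simp only [Complex.normSq_apply, Complex.add_re, Complex.add_im,
            Complex.ofReal_re, Complex.ofReal_im]
          ring
        have h13 := hPrepos z hz
        nlinarith
      -- (1 - nsq z) * d ≤ 4 a Re P
      have h14 : (1 - normSq z) * normSq (P z + (a:ℂ)) ≤ 4 * a * (P z).re := by
        nlinarith
      calc (1 - normSq z) * normSq (P z) ≤ (1 - normSq z) * normSq (P z + (a:ℂ)) :=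
            mul_le_mul_of_nonneg_left h11 hznn
        _ ≤ 4 * a * (P z).re := h14
    -- decompose p z
    have hpz : p z = P z + (b:ℂ) * Complex.I - (ε:ℂ) := by
      rw [hPdef]; ring
    have hsplit : (starRingEnd ℂ) z * ((1 - z) ^ 2 * p z) =
        (starRingEnd ℂ) z * ((1 - z)^2 * P z)
        + ((starRingEnd ℂ) z * (1 - z)^2) * ((b:ℂ) * Complex.I)
        - (ε:ℂ) * ((starRingEnd ℂ) z * (1 - z)^2) := by
      rw [hpz]; ring
    rw [hsplit, Complex.sub_re, Complex.add_re]
    -- term 2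
    have hT2 : (((starRingEnd ℂ) z * (1 - z)^2) * ((b:ℂ) * Complex.I)).re =
        b * z.im * (1 - normSq z) := by
      have h15 : (((starRingEnd ℂ) z * (1 - z)^2) * ((b:ℂ) * Complex.I)).re =
          -b * ((starRingEnd ℂ) z * (1 - z)^2).im := by
        simp [Complex.mul_re]
        ring
      rw [h15, im_identity]
      ring
    -- term 3
    have hT3 : |((ε:ℂ) * ((starRingEnd ℂ) z * (1 - z)^2)).re| ≤ 4 * ε := by
      have h16 : ‖(ε:ℂ) * ((starRingEnd ℂ) z * (1 - z)^2)‖ ≤ ε * 4 := by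
        rw [norm_mul, norm_mul, norm_pow]
        have hz4 : ‖z‖ ≤ 1 := by
          exact (mem_ball_zero_iff.1 hz).le
        have h1z : ‖1 - z‖ ≤ 2 := by
          calc ‖1 - z‖ ≤ ‖(1:ℂ)‖ + ‖z‖ := by
                exact norm_sub_le _ _
            _ ≤ 2 := by rw [norm_one]; linarith
        have hε' : ‖(ε:ℂ)‖ = ε := by
          rw [Complex.norm_real, Real.norm_eq_abs, _root_.abs_of_nonneg hε0.le]
        rw [Complex.norm_conj, hε']
        calc ε * (‖z‖ * ‖1 - z‖ ^ 2) ≤ ε * (1 * 2^2) := by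
              refine mul_le_mul_of_nonneg_left ?_ hε0.le
              refine mul_le_mul hz4 ?_ (by positivity) one_pos.le
              exact pow_le_pow_left₀ (norm_nonneg _) h1z 2
          _ = ε * 4 := by ring
      calc |((ε:ℂ) * ((starRingEnd ℂ) z * (1 - z)^2)).re|
          ≤ ‖(ε:ℂ) * ((starRingEnd ℂ) z * (1 - z)^2)‖ := Complex.abs_re_le_norm _
        _ ≤ 4 * ε := by linarith
    -- term 1
    have hT1 : ((starRingEnd ℂ) z * ((1 - z)^2 * P z)).re ≤ 2 * a * (1 - normSq z) := by
      rw [re_identity]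
      set u : ℝ := ‖1 - z‖ with hudef
      set AP : ℝ := ‖P z‖ with hAPdef
      set RP : ℝ := (P z).re with hRPdef
      have hRP0 : 0 < RP := hPrepos z hz
      have hf1 : ((1 - z) * P z).re ≤ u * AP := by
        calc ((1 - z) * P z).re ≤ |((1 - z) * P z).re| := le_abs_self _
          _ ≤ ‖(1 - z) * P z‖ := Complex.abs_re_le_norm _
          _ = u * AP := by rw [norm_mul]
      have hf2 : (1 - normSq z) * AP^2 ≤ 4 * a * RP := by
        rw [hAPdef, Complex.sq_norm]
        exact hquad
      have hu2 : u^2 = normSq (1 - z) := Complex.sq_norm _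
      have hu0 : 0 ≤ u := norm_nonneg _
      have hAP0 : 0 ≤ AP := norm_nonneg _
      have hmul : (1 - normSq z) * ((1 - z) * P z).re ≤ (1 - normSq z) * (u * AP) :=
        mul_le_mul_of_nonneg_left hf1 hznn
      have hsq := sq_nonneg (u * RP - (1 - normSq z) * AP)
      -- 2*u*RP*(1-nsq)*AP ≤ u²RP² + (1-nsq)²AP² ≤ u²RP² + (1-nsq)*4aRP
      have hsq' : 2*(u*RP)*((1 - normSq z)*AP) ≤ (u*RP)^2 + ((1 - normSq z)*AP)^2 := by
        nlinarith [hsq]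
      have hA : (1 - normSq z) * ((1 - normSq z) * AP^2) ≤ (1 - normSq z) * (4 * a * RP) :=
        mul_le_mul_of_nonneg_left hf2 hznn
      have hgoal2 : (1 - normSq z) * (u * AP) * (2 * RP) ≤
          (u^2 * RP + 2 * a * (1 - normSq z)) * (2 * RP) := by
        nlinarith [hsq', hA, sq_nonneg (u*RP)]
      have := le_of_mul_le_mul_right
        (by linarith [hgoal2] : (1 - normSq z) * (u * AP) * (2 * RP) ≤
          (u^2 * RP + 2 * a * (1 - normSq z)) * (2 * RP)) (by positivity : (0:ℝ) < 2 * RP)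
      have hfin : (1 - normSq z) * ((1 - z) * P z).re ≤ u^2 * RP + 2 * a * (1 - normSq z) :=
        le_trans hmul this
      rw [← hu2]
      nlinarith [mul_pos (mul_pos (by norm_num : (0:ℝ) < 1) hRP0) hRP0]
    -- combine
    have hT2b : (((starRingEnd ℂ) z * (1 - z)^2) * ((b:ℂ) * Complex.I)).re ≤
        |b| * (1 - normSq z) := by
      rw [hT2]
      have him1 : |z.im| ≤ 1 := by
        have h17 : |z.im| ≤ ‖z‖ := Complex.abs_im_le_norm z
        have h18 : ‖z‖ ≤ 1 := by
          exact (mem_ball_zero_iff.1 hz).le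
        linarith
      have h19 : b * z.im ≤ |b| := by
        calc b * z.im ≤ |b * z.im| := le_abs_self _
          _ = |b| * |z.im| := abs_mul _ _
          _ ≤ |b| * 1 := mul_le_mul_of_nonneg_left him1 (abs_nonneg _)
          _ = |b| := mul_one _
      exact mul_le_mul_of_nonneg_right h19 hznn
    have hT3b : -(((ε:ℂ) * ((starRingEnd ℂ) z * (1 - z)^2)).re) ≤ 4 * ε := by
      have := neg_abs_le (((ε:ℂ) * ((starRingEnd ℂ) z * (1 - z)^2)).re)
      linarith [hT3]
    have haa : a ≤ (p 0).re + 1 := by rw [hadef]; linarith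
    calc ((starRingEnd ℂ) z * ((1 - z)^2 * P z)).re
          + (((starRingEnd ℂ) z * (1 - z)^2) * ((b:ℂ) * Complex.I)).re
          - ((ε:ℂ) * ((starRingEnd ℂ) z * (1 - z)^2)).re
        ≤ 2 * a * (1 - normSq z) + |b| * (1 - normSq z) + 4 * ε := by linarith
      _ ≤ (|b| + 2 * (p 0).re + 2) * (1 - normSq z) + 4 * ε := by nlinarith
  -- let ε → 0
  have hmain : ((starRingEnd ℂ) z * ((1 - z) ^ 2 * p z)).re ≤
      (|b| + 2 * (p 0).re + 2) * (1 - normSq z) := by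
    refine le_of_forall_pos_le_add (fun ε' hε' => ?_)
    have hδ0 : 0 < min (ε'/4) 1 := lt_min (by positivity) one_pos
    have := hstep (min (ε'/4) 1) hδ0 (min_le_right _ _)
    have h20 : 4 * min (ε'/4) 1 ≤ ε' := by
      have := min_le_left (ε'/4) 1
      linarith
    linarith
  linarith

end BPAux

/-- if `p` is holomorphic on the unit disk with `Re p ≥ 0`, then both
`g z = -(1 - z)² p z` and `g₁ z = z p z` are infinitesimal generators of
one-parameter continuous semigroups of holomorphic self-maps of the disk. -/
theorem berkson_porta_special_generators (p : ℂ → ℂ)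
    (hp : DifferentiableOn ℂ p (ball (0 : ℂ) 1))
    (hre : ∀ z ∈ ball (0 : ℂ) 1, 0 ≤ (p z).re) :
    IsGenOnDisk (fun z : ℂ => -(1 - z) ^ 2 * p z) ∧
      IsGenOnDisk (fun z : ℂ => z * p z) := by
  constructor
  · have h := BPAux.isGen (G := fun z => (1 - z) ^ 2 * p z) (c := 2 * (|(p 0).im| + 2 * (p 0).re + 2))
      (by fun_prop)
      (by
        have h0 : 0 ≤ (p 0).re := hre 0 (by simp)
        have := abs_nonneg (p 0).im
        nlinarith)
      (BPAux.key_ineq hp hre)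
    have e : (fun z : ℂ => -((1 - z)^2 * p z)) = (fun z : ℂ => -(1 - z) ^ 2 * p z) := by
      funext z; ring
    rwa [e] at h
  · have h := BPAux.isGen (G := fun z => -(z * p z)) (c := 0)
      (by fun_prop)
      le_rfl
      (fun w hw => by
        have h0 : 0 ≤ (p w).re := hre w hw
        have : ((starRingEnd ℂ) w * -(w * p w)).re = -(Complex.normSq w * (p w).re) := by
          simp [Complex.mul_re, Complex.normSq_apply]; ring
        rw [this]
        nlinarith [Complex.normSq_nonneg w])
    have e : (fun z : ℂ => - -(z * p z)) = (fun z : ℂ => z * p z) := by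
      funext z; ring
    rwa [e] at h
end

section
/- Let g : Δ → ℂ be a holomorphic infinitesimal generator of the form g(z) = −(1 − z)²·p(z) with p : Δ → ℂ holomorphic, Re p(z) ≥ 0 on Δ, and p nowhere vanishing. If the angular limit ∠lim_{z→1} g(z)/|z − 1|³ = 0, then the function g₁(z) = z·p(z) = −z·g(z)/(1 − z)² satisfies ∠lim_{z→1} g₁(z) = 0 and ∠lim_{z→1} g₁(z)/(z − 1) = 0. -/
open Filter Metric

/-- if the generator `g z = -(1 - z)² p z` (with `p` holomorphic,
`Re p ≥ 0`, `p` nowhere vanishing on `Δ`) satisfies `∠lim_{z→1} g z / |z-1|³ = 0`,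
then `g₁ z = z p z` satisfies `∠lim_{z→1} g₁ z = 0` and `∠lim_{z→1} g₁ z / (z-1) = 0`. -/
theorem angular_limits_of_associated_generator (g p : ℂ → ℂ)
    (hp : DifferentiableOn ℂ p (ball (0 : ℂ) 1))
    (hre : ∀ z ∈ ball (0 : ℂ) 1, 0 ≤ (p z).re)
    (hpne : ∀ z ∈ ball (0 : ℂ) 1, p z ≠ 0)
    (hgen : IsGenOnDisk g)
    (hrepr : ∀ z ∈ ball (0 : ℂ) 1, g z = -(1 - z) ^ 2 * p z)
    (hlim : AngularLimit (fun z : ℂ => g z / ((‖z - 1‖ ^ 3 : ℝ) : ℂ)) 1 0) :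
    AngularLimit (fun z : ℂ => z * p z) 1 0 ∧
      AngularLimit (fun z : ℂ => z * p z / (z - 1)) 1 0 := by
  have hmain : ∀ k : ℝ, 1 < k →
      Tendsto (fun z : ℂ => ‖p z‖ / ‖z - 1‖)
        (nhdsWithin 1 (nontangentialRegion k 1)) (nhds 0) := by
    intro k hk
    have H := (hlim k hk).norm
    simp only [norm_zero] at H
    refine H.congr' ?_
    filter_upwards [eventually_mem_nhdsWithin] with z hz
    obtain ⟨hz1, _⟩ := hz
    have hzb : z ∈ ball (0 : ℂ) 1 := by
      simpa [mem_ball, Complex.dist_eq] using hz1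
    have hzne : z - 1 ≠ 0 := by
      intro h
      rw [sub_eq_zero] at h
      simp [h] at hz1
    have hr : 0 < ‖z - 1‖ := norm_pos_iff.mpr hzne
    rw [hrepr z hzb]
    have h1 : ‖1 - z‖ = ‖z - 1‖ := norm_sub_rev 1 z
    rw [norm_div, norm_mul, norm_neg, norm_pow, h1,
      Complex.norm_real, Real.norm_eq_abs, abs_of_nonneg (by positivity : (0:ℝ) ≤ ‖z - 1‖ ^ 3)]
    field_simp
  constructor <;> intro k hk <;>
    rw [tendsto_zero_iff_norm_tendsto_zero]
  · have H2 : Tendsto (fun z : ℂ => 2 * (‖p z‖ / ‖z - 1‖))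
        (nhdsWithin 1 (nontangentialRegion k 1)) (nhds 0) := by
      simpa using (hmain k hk).const_mul 2
    refine squeeze_zero' (by filter_upwards with z using norm_nonneg _) ?_ H2
    filter_upwards [eventually_mem_nhdsWithin] with z hz
    obtain ⟨hz1, _⟩ := hz
    have hzne : z - 1 ≠ 0 := by
      intro h; rw [sub_eq_zero] at h; simp [h] at hz1
    have hr : 0 < ‖z - 1‖ := norm_pos_iff.mpr hzne
    have hr2 : ‖z - 1‖ ≤ 2 := by
      have h := norm_sub_le z (1 : ℂ)
      simp at h
      linarith
    rw [norm_mul]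
    calc ‖z‖ * ‖p z‖ ≤ 1 * ‖p z‖ := by
          apply mul_le_mul_of_nonneg_right hz1.le (norm_nonneg _)
      _ = ‖p z‖ / ‖z - 1‖ * ‖z - 1‖ := by
          field_simp
      _ ≤ ‖p z‖ / ‖z - 1‖ * 2 := by
          apply mul_le_mul_of_nonneg_left hr2 (by positivity)
      _ = 2 * (‖p z‖ / ‖z - 1‖) := by ring
  · refine squeeze_zero' (by filter_upwards with z using norm_nonneg _) ?_ (hmain k hk)
    filter_upwards [eventually_mem_nhdsWithin] with z hz
    obtain ⟨hz1, _⟩ := hz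
    have hzne : z - 1 ≠ 0 := by
      intro h; rw [sub_eq_zero] at h; simp [h] at hz1
    have hr : 0 < ‖z - 1‖ := norm_pos_iff.mpr hzne
    rw [norm_div, norm_mul]
    refine (div_le_div_iff_of_pos_right hr).mpr ?_
    nlinarith [norm_nonneg (p z), norm_nonneg z, hz1.le]
end
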